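/- arXiv:1901.03747 — 4 statements merged into one kernel-verified Lean document; each statement's English description precedes it below -/
import Mathlib

section
/- Let Σ=(X,𝒰,φ) be a control system with the BIC property. If Σ is UGS and has the bUAG property, then Σ is forward complete and has the UAG property; more precisely, if γ∈K∞∪{0} serves simultaneously as the bUAG gain and as the UGS input gain, and σ∈K∞ is the UGS state bound, then Σ satisfies the UAG property with gain γ+σ. -/
open Set Filter

noncomputable section

/-- Class `K` comparison functions: continuous, strictly increasing on `[0,∞)`, vanishing at `0`. -/
def IsClassK (γ : ℝ → ℝ) : Prop :=
  ContinuousOn γ (Set.Ici 0) ∧ StrictMonoOn γ (Set.Ici 0) ∧ γ 0 = 0 ∧ ∀ r ≥ (0:ℝ), 0 ≤ γ r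

/-- Class `K∞`: unbounded class `K` functions. -/
def IsClassKinf (γ : ℝ → ℝ) : Prop :=
  IsClassK γ ∧ ∀ M : ℝ, ∃ r ≥ (0:ℝ), M < γ r

/-- Class `K ∪ {0}`. -/
def IsClassKZero (γ : ℝ → ℝ) : Prop := IsClassK γ ∨ γ = fun _ => 0

/-- Class `K∞ ∪ {0}`. -/
def IsClassKinfZero (γ : ℝ → ℝ) : Prop := IsClassKinf γ ∨ γ = fun _ => 0

/-- Class `L`: continuous, nonincreasing on `[0,∞)`, converging to `0` at infinity. -/
def IsClassL (γ : ℝ → ℝ) : Prop :=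
  ContinuousOn γ (Set.Ici 0) ∧ AntitoneOn γ (Set.Ici 0) ∧
    Filter.Tendsto γ Filter.atTop (nhds 0) ∧ ∀ r ≥ (0:ℝ), 0 ≤ γ r

/-- Class `KL` functions. -/
def IsClassKL (β : ℝ → ℝ → ℝ) : Prop :=
  (∀ t ≥ (0:ℝ), IsClassK (fun r => β r t)) ∧ (∀ r > (0:ℝ), IsClassL (fun t => β r t))

/-- A normed linear space of inputs: a set of functions `[0,∞) → U` (modeled on `ℝ`),
with a norm, satisfying the axioms of shift invariance and concatenation. -/
structure InputSpace (U : Type*) where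
  carrier : Set (ℝ → U)
  normU : (ℝ → U) → ℝ
  nonempty : carrier.Nonempty
  normU_nonneg : ∀ u ∈ carrier, 0 ≤ normU u
  shift_mem : ∀ u ∈ carrier, ∀ τ ≥ (0:ℝ), (fun t => u (t + τ)) ∈ carrier
  shift_norm : ∀ u ∈ carrier, ∀ τ ≥ (0:ℝ), normU (fun t => u (t + τ)) ≤ normU u
  concat_mem : ∀ u₁ ∈ carrier, ∀ u₂ ∈ carrier, ∀ t > (0:ℝ),
    (fun τ => if τ ≤ t then u₁ τ else u₂ (τ - t)) ∈ carrier

/-- A (possibly not forward complete) control system `Σ = (X, 𝒰, φ)` with transition map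
`flow` defined on a domain `dom ⊆ ℝ₊ × X × 𝒰`, satisfying the identity, causality,
continuity and cocycle axioms. -/
structure ControlSystem (X : Type*) [NormedAddCommGroup X] (U : Type*) where
  inp : InputSpace U
  dom : Set (ℝ × X × (ℝ → U))
  flow : ℝ → X → (ℝ → U) → X
  dom_sub : ∀ p ∈ dom, 0 ≤ p.1 ∧ p.2.2 ∈ inp.carrier
  dom_exists : ∀ x : X, ∀ u ∈ inp.carrier, ∃ t > (0:ℝ), ∀ s ∈ Set.Icc 0 t, (s, x, u) ∈ dom
  identity : ∀ x : X, ∀ u ∈ inp.carrier, flow 0 x u = x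
  causality : ∀ t ≥ (0:ℝ), ∀ x : X, ∀ u ∈ inp.carrier, ∀ v ∈ inp.carrier,
    (t, x, u) ∈ dom → (t, x, v) ∈ dom → (∀ s ∈ Set.Icc 0 t, u s = v s) →
    flow t x u = flow t x v
  cont : ∀ x : X, ∀ u ∈ inp.carrier,
    ContinuousOn (fun t => flow t x u) {t : ℝ | (t, x, u) ∈ dom}
  cocycle : ∀ x : X, ∀ u ∈ inp.carrier, ∀ t ≥ (0:ℝ), ∀ h ≥ (0:ℝ),
    (∀ s ∈ Set.Icc 0 (t + h), (s, x, u) ∈ dom) →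
    flow h (flow t x u) (fun s => u (s + t)) = flow (t + h) x u

namespace ControlSystem

variable {X U : Type*} [NormedAddCommGroup X]

/-- Forward completeness: `φ(t,x,u)` is well defined for all `t ≥ 0`, `x ∈ X`, `u ∈ 𝒰`. -/
def ForwardComplete (S : ControlSystem X U) : Prop :=
  ∀ t ≥ (0:ℝ), ∀ x : X, ∀ u ∈ S.inp.carrier, (t, x, u) ∈ S.dom

/-- The boundedness-implies-continuation property. -/
def BIC (S : ControlSystem X U) : Prop :=
  ∀ x : X, ∀ u ∈ S.inp.carrier,
    (∀ t ≥ (0:ℝ), (t, x, u) ∈ S.dom) ∨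
    ∃ tmax > (0:ℝ),
      (∀ t, 0 ≤ t → t < tmax → (t, x, u) ∈ S.dom) ∧
      (∀ t ≥ tmax, (t, x, u) ∉ S.dom) ∧
      ∀ M > (0:ℝ), ∃ t, 0 ≤ t ∧ t < tmax ∧ M < ‖S.flow t x u‖

/-- Uniform global stability. -/
def UGS (S : ControlSystem X U) : Prop :=
  ∃ σ γ : ℝ → ℝ, IsClassKinf σ ∧ IsClassKinfZero γ ∧
    ∀ t x u, (t, x, u) ∈ S.dom → ‖S.flow t x u‖ ≤ σ ‖x‖ + γ (S.inp.normU u)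

end ControlSystem

namespace ControlSystem

variable {X U : Type*} [NormedAddCommGroup X]

/-- UGS with prescribed state bound `σ` and input gain `γ`. -/
def UGSWith (S : ControlSystem X U) (σ γ : ℝ → ℝ) : Prop :=
  ∀ t x u, (t, x, u) ∈ S.dom → ‖S.flow t x u‖ ≤ σ ‖x‖ + γ (S.inp.normU u)

/-- The bounded input uniform asymptotic gain property with prescribed gain `γ`. -/
def bUAGWith (S : ControlSystem X U) (γ : ℝ → ℝ) : Prop :=
  ∀ ε > (0:ℝ), ∀ r > (0:ℝ), ∃ τ ≥ (0:ℝ),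
    ∀ u ∈ S.inp.carrier, S.inp.normU u ≤ r → ∀ x : X, ‖x‖ ≤ r →
      ∀ t ≥ τ, (t, x, u) ∈ S.dom → ‖S.flow t x u‖ ≤ ε + γ (S.inp.normU u)

/-- The uniform asymptotic gain property with prescribed gain `γ`. -/
def UAGWith (S : ControlSystem X U) (γ : ℝ → ℝ) : Prop :=
  ∀ ε > (0:ℝ), ∀ r > (0:ℝ), ∃ τ ≥ (0:ℝ),
    ∀ u ∈ S.inp.carrier, ∀ x : X, ‖x‖ ≤ r →
      ∀ t ≥ τ, (t, x, u) ∈ S.dom → ‖S.flow t x u‖ ≤ ε + γ (S.inp.normU u)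

end ControlSystem

/-- If a control system with the BIC property is UGS (with state bound `σ ∈ K∞`
and input gain `γ ∈ K∞ ∪ {0}`) and has the bUAG property with the same gain `γ`, then it is
forward complete and has the UAG property with gain `γ + σ`. -/
theorem ugs_and_buag_imply_uag {X U : Type*} [NormedAddCommGroup X]
    (S : ControlSystem X U) (hBIC : S.BIC)
    (σ γ : ℝ → ℝ) (hσ : IsClassKinf σ) (hγ : IsClassKinfZero γ)
    (hUGS : S.UGSWith σ γ) (hbUAG : S.bUAGWith γ) :
    S.ForwardComplete ∧ S.UAGWith (fun r => γ r + σ r) := by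
  have hσ0 : ∀ r ≥ (0:ℝ), 0 ≤ σ r := hσ.1.2.2.2
  have hγ0 : ∀ r ≥ (0:ℝ), 0 ≤ γ r := by
    rcases hγ with h | h
    · exact h.1.2.2.2
    · intro r _; simp [h]
  have hσmono : MonotoneOn σ (Set.Ici 0) := hσ.1.2.1.monotoneOn
  constructor
  · -- forward completeness
    intro t ht x u hu
    rcases hBIC x u hu with h | ⟨tmax, htmax, hdom, _, hM⟩
    · exact h t ht
    · exfalso
      have hx0 : (0:ℝ) ≤ ‖x‖ := norm_nonneg x
      have hu0 : (0:ℝ) ≤ S.inp.normU u := S.inp.normU_nonneg u hu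
      have hMpos : (0:ℝ) < σ ‖x‖ + γ (S.inp.normU u) + 1 := by
        have := hσ0 _ hx0; have := hγ0 _ hu0; linarith
      obtain ⟨t', ht'0, ht'lt, hbig⟩ := hM _ hMpos
      have hd : (t', x, u) ∈ S.dom := hdom t' ht'0 ht'lt
      have := hUGS t' x u hd
      linarith
  · -- UAG with gain γ + σ
    intro ε hε r hr
    obtain ⟨τ, hτ0, hτ⟩ := hbUAG ε hε r hr
    refine ⟨τ, hτ0, ?_⟩
    intro u hu x hx t htτ hd
    have hu0 : (0:ℝ) ≤ S.inp.normU u := S.inp.normU_nonneg u hu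
    have hx0 : (0:ℝ) ≤ ‖x‖ := norm_nonneg x
    by_cases hcase : S.inp.normU u ≤ r
    · have := hτ u hu hcase x hx t htτ hd
      have hσnn := hσ0 _ hu0
      simpa using this.trans (by linarith)
    · push_neg at hcase
      have hle : ‖x‖ ≤ S.inp.normU u := hx.trans hcase.le
      have hσle : σ ‖x‖ ≤ σ (S.inp.normU u) := hσmono hx0 hu0 hle
      have := hUGS t x u hd
      have hγnn := hγ0 _ hu0
      simp only []
      linarith
end
end

section
/- Let Σᵢ=(Xᵢ,PC([0,∞),X_{≠i})×𝒰,φ̄ᵢ) be a forward complete control system. Then Σᵢ is UGS if and only if there exist γᵢⱼ,γᵢ∈K∪{0} (j=1,…,n, j≠i) and σᵢ∈K∞ such that for all xᵢ∈Xᵢ, all internal inputs w_{≠i}=(w₁,…,w_{i−1},w_{i+1},…,wₙ)∈PC([0,∞),X_{≠i}), all external inputs u∈𝒰 and all t≥0: ‖φ̄ᵢ(t,xᵢ,(w_{≠i},u))‖_{Xᵢ} ≤ σᵢ(‖xᵢ‖_{Xᵢ}) + Σ_{j≠i} γᵢⱼ(‖wⱼ‖_{[0,t]}) + γᵢ(‖u‖_𝒰).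 -/
open Set Filter

noncomputable section

/-- Globally bounded, piecewise continuous, right-continuous functions on `[0,∞)`. -/
def PCFun {E : Type*} [NormedAddCommGroup E] (w : ℝ → E) : Prop :=
  (∃ M : ℝ, ∀ t ≥ (0:ℝ), ‖w t‖ ≤ M) ∧
  (∀ t ≥ (0:ℝ), ContinuousWithinAt w (Set.Ici t) t) ∧
  (∀ T > (0:ℝ), ∃ s : Finset ℝ, ContinuousOn w (Set.Icc 0 T \ (s : Set ℝ)))

/-- Supremum of the norm of `w` over a set of times. -/
noncomputable def supNormOn {E : Type*} [NormedAddCommGroup E] (w : ℝ → E) (s : Set ℝ) : ℝ :=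
  sSup ((fun t => ‖w t‖) '' s)

/-- The `i`-th subsystem `Σᵢ = (Xᵢ, PC(ℝ₊, X_{≠i}) × 𝒰, φ̄ᵢ)`: a forward complete control
system whose inputs are pairs of an internal input `w` (a `PC` function with values in the
product of the other state spaces) and an external input `u ∈ 𝒰`. -/
structure Subsystem {n : ℕ} (X : Fin n → Type*) [∀ j, NormedAddCommGroup (X j)]
    (i : Fin n) {U : Type*} (inp : InputSpace U) where
  flow : ℝ → X i → (∀ j : {j : Fin n // j ≠ i}, ℝ → X j.1) → (ℝ → U) → X i
  identity : ∀ x w u, flow 0 x w u = x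
  causality : ∀ t ≥ (0:ℝ), ∀ x : X i,
    ∀ w₁ w₂ : ∀ j : {j : Fin n // j ≠ i}, ℝ → X j.1,
    ∀ u ∈ inp.carrier, ∀ v ∈ inp.carrier,
    (∀ j, ∀ s ∈ Set.Icc 0 t, w₁ j s = w₂ j s) → (∀ s ∈ Set.Icc 0 t, u s = v s) →
    flow t x w₁ u = flow t x w₂ v
  cont : ∀ x : X i, ∀ w : ∀ j : {j : Fin n // j ≠ i}, ℝ → X j.1, ∀ u ∈ inp.carrier,
    (∀ j, PCFun (w j)) → ContinuousOn (fun t => flow t x w u) (Set.Ici 0)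
  cocycle : ∀ x : X i, ∀ w : ∀ j : {j : Fin n // j ≠ i}, ℝ → X j.1, ∀ u ∈ inp.carrier,
    (∀ j, PCFun (w j)) → ∀ t ≥ (0:ℝ), ∀ h ≥ (0:ℝ),
    flow h (flow t x w u) (fun j s => w j (s + t)) (fun s => u (s + t)) = flow (t + h) x w u

/-- Norm of the combined input `(w, u)` of a subsystem:
`‖(w,u)‖ = √(Σ_{j≠i} ‖wⱼ‖∞² + ‖u‖_𝒰²)`. -/
noncomputable def pairNorm {n : ℕ} {X : Fin n → Type*} [∀ j, NormedAddCommGroup (X j)]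
    {i : Fin n} (w : ∀ j : {j : Fin n // j ≠ i}, ℝ → X j.1) (r : ℝ) : ℝ :=
  Real.sqrt ((∑ j : {j : Fin n // j ≠ i}, (supNormOn (w j) (Set.Ici 0)) ^ 2) + r ^ 2)

namespace Subsystem

variable {n : ℕ} {X : Fin n → Type*} [∀ j, NormedAddCommGroup (X j)] {i : Fin n}
  {U : Type*} {inp : InputSpace U}

/-- Input-to-state stability of the subsystem `Σᵢ`, with respect to the norm of the
whole input `(w, u)`. -/
def ISS (S : Subsystem X i inp) : Prop :=
  ∃ β : ℝ → ℝ → ℝ, ∃ γ : ℝ → ℝ, IsClassKL β ∧ IsClassK γ ∧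
    ∀ t ≥ (0:ℝ), ∀ x : X i, ∀ w, (∀ j, PCFun (w j)) → ∀ u ∈ inp.carrier,
      ‖S.flow t x w u‖ ≤ β ‖x‖ t + γ (pairNorm w (inp.normU u))

/-- Uniform global stability of the subsystem `Σᵢ`. -/
def UGS (S : Subsystem X i inp) : Prop :=
  ∃ σ γ : ℝ → ℝ, IsClassKinf σ ∧ IsClassKinfZero γ ∧
    ∀ t ≥ (0:ℝ), ∀ x : X i, ∀ w, (∀ j, PCFun (w j)) → ∀ u ∈ inp.carrier,
      ‖S.flow t x w u‖ ≤ σ ‖x‖ + γ (pairNorm w (inp.normU u))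

/-- The asymptotic gain property of the subsystem `Σᵢ`. -/
def AG (S : Subsystem X i inp) : Prop :=
  ∃ γ : ℝ → ℝ, IsClassKinfZero γ ∧
    ∀ ε > (0:ℝ), ∀ x : X i, ∀ w, (∀ j, PCFun (w j)) → ∀ u ∈ inp.carrier,
      ∃ τ ≥ (0:ℝ), ∀ t ≥ τ, ‖S.flow t x w u‖ ≤ ε + γ (pairNorm w (inp.normU u))

/-- The bounded input uniform asymptotic gain property of the subsystem `Σᵢ`. -/
def bUAG (S : Subsystem X i inp) : Prop :=
  ∃ γ : ℝ → ℝ, IsClassKinfZero γ ∧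
    ∀ ε > (0:ℝ), ∀ r > (0:ℝ), ∃ τ ≥ (0:ℝ),
      ∀ x : X i, ∀ w, (∀ j, PCFun (w j)) → ∀ u ∈ inp.carrier,
        ‖x‖ ≤ r → pairNorm w (inp.normU u) ≤ r →
        ∀ t ≥ τ, ‖S.flow t x w u‖ ≤ ε + γ (pairNorm w (inp.normU u))

end Subsystem


lemma classKZero_mono {γ : ℝ → ℝ} (h : IsClassKZero γ) {a b : ℝ} (ha : 0 ≤ a) (hab : a ≤ b) :
    γ a ≤ γ b := by
  rcases h with h | h
  · exact h.2.1.monotoneOn (Set.mem_Ici.2 ha) (Set.mem_Ici.2 (ha.trans hab)) hab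
  · simp [h]

lemma classKZero_nonneg {γ : ℝ → ℝ} (h : IsClassKZero γ) {r : ℝ} (hr : 0 ≤ r) : 0 ≤ γ r := by
  rcases h with h | h
  · exact h.2.2.2 r hr
  · simp [h]

lemma classKZero_zero {γ : ℝ → ℝ} (h : IsClassKZero γ) : γ 0 = 0 := by
  rcases h with h | h
  · exact h.2.2.1
  · simp [h]

lemma classKZero_contOn {γ : ℝ → ℝ} (h : IsClassKZero γ) : ContinuousOn γ (Set.Ici 0) := by
  rcases h with h | h
  · exact h.1
  · simp [h]; exact continuousOn_const

lemma supNormOn_nonneg {E : Type*} [NormedAddCommGroup E] (w : ℝ → E) (s : Set ℝ) :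
    0 ≤ supNormOn w s :=
  Real.sSup_nonneg (by rintro _ ⟨a, _, rfl⟩; exact norm_nonneg _)

lemma supNormOn_le {E : Type*} [NormedAddCommGroup E] {w : ℝ → E} {s : Set ℝ} {c : ℝ}
    (h : ∀ a ∈ s, ‖w a‖ ≤ c) (hc : 0 ≤ c) : supNormOn w s ≤ c :=
  Real.sSup_le (by rintro _ ⟨a, ha, rfl⟩; exact h a ha) hc

lemma le_supNormOn {E : Type*} [NormedAddCommGroup E] {w : ℝ → E} {s : Set ℝ}
    (hb : BddAbove ((fun t => ‖w t‖) '' s)) {a : ℝ} (ha : a ∈ s) : ‖w a‖ ≤ supNormOn w s :=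
  le_csSup hb ⟨a, ha, rfl⟩

lemma bddAbove_norm_image {E : Type*} [NormedAddCommGroup E] {w : ℝ → E} {M : ℝ}
    (hM : ∀ s ≥ (0:ℝ), ‖w s‖ ≤ M) {s : Set ℝ} (hs : s ⊆ Set.Ici 0) :
    BddAbove ((fun t => ‖w t‖) '' s) :=
  ⟨M, by rintro _ ⟨a, ha, rfl⟩; exact hM a (hs ha)⟩

lemma sqrt_sum_sq_le {ι : Type*} [Fintype ι] (a : ι → ℝ) (ha : ∀ j, 0 ≤ a j) {r : ℝ}
    (hr : 0 ≤ r) : Real.sqrt ((∑ j, a j ^ 2) + r ^ 2) ≤ (∑ j, a j) + r := by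
  have hs : ∑ j, a j ^ 2 ≤ (∑ j, a j) ^ 2 :=
    Finset.sum_sq_le_sq_sum_of_nonneg (fun j _ => ha j)
  have h0 : 0 ≤ ∑ j, a j := Finset.sum_nonneg fun j _ => ha j
  have h1 : (∑ j, a j ^ 2) + r ^ 2 ≤ ((∑ j, a j) + r) ^ 2 := by nlinarith
  calc Real.sqrt ((∑ j, a j ^ 2) + r ^ 2) ≤ Real.sqrt (((∑ j, a j) + r) ^ 2) :=
        Real.sqrt_le_sqrt h1
    _ = (∑ j, a j) + r := Real.sqrt_sq (by positivity)

lemma classK_sum_bound {ι : Type*} [Fintype ι] {γ : ℝ → ℝ} (hγ : IsClassK γ)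
    (a : ι → ℝ) (ha : ∀ j, 0 ≤ a j) {r : ℝ} (hr : 0 ≤ r) :
    γ ((∑ j, a j) + r) ≤
      (∑ j, γ (((Fintype.card ι : ℝ) + 1) * a j)) + γ (((Fintype.card ι : ℝ) + 1) * r) := by
  set m : ℝ := (Fintype.card ι : ℝ) + 1 with hm_def
  have hm : (0:ℝ) < m := by positivity
  have hmono := hγ.2.1.monotoneOn
  have hnn := hγ.2.2.2
  have hsum0 : 0 ≤ (∑ j, a j) + r := by
    have := Finset.sum_nonneg (fun j (_ : j ∈ Finset.univ) => ha j); linarith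
  have hsumnn : 0 ≤ ∑ j, γ (m * a j) :=
    Finset.sum_nonneg fun j _ => hnn _ (by have := ha j; positivity)
  have hrnn : 0 ≤ γ (m * r) := hnn _ (by positivity)
  by_cases hc : ∀ j, a j ≤ r
  · have hcard : ∑ j, a j ≤ (Fintype.card ι : ℝ) * r := by
      calc ∑ j, a j ≤ ∑ _j : ι, r := Finset.sum_le_sum fun j _ => hc j
        _ = (Fintype.card ι : ℝ) * r := by
            simp [Finset.sum_const, Finset.card_univ, nsmul_eq_mul]
    have hle : (∑ j, a j) + r ≤ m * r := by rw [hm_def]; nlinarith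
    have := hmono (Set.mem_Ici.2 hsum0) (Set.mem_Ici.2 (by positivity)) hle
    linarith
  · push_neg at hc
    obtain ⟨j₀, hj₀⟩ := hc
    obtain ⟨k, -, hk⟩ := Finset.exists_max_image Finset.univ a ⟨j₀, Finset.mem_univ _⟩
    have hkr : r ≤ a k := (hj₀.le.trans (hk j₀ (Finset.mem_univ _)))
    have hak : 0 ≤ a k := ha k
    have hcard : ∑ j, a j ≤ (Fintype.card ι : ℝ) * a k := by
      calc ∑ j, a j ≤ ∑ _j : ι, a k := Finset.sum_le_sum fun j _ => hk j (Finset.mem_univ _)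
        _ = (Fintype.card ι : ℝ) * a k := by
            simp [Finset.sum_const, Finset.card_univ, nsmul_eq_mul]
    have hle : (∑ j, a j) + r ≤ m * a k := by rw [hm_def]; nlinarith
    have h1 := hmono (Set.mem_Ici.2 hsum0) (Set.mem_Ici.2 (by positivity)) hle
    have h2 : γ (m * a k) ≤ ∑ j, γ (m * a j) :=
      Finset.single_le_sum (f := fun j => γ (m * a j))
        (fun j _ => hnn _ (by have := ha j; positivity)) (Finset.mem_univ k)
    linarith

lemma pc_trunc {E : Type*} [NormedAddCommGroup E] {w : ℝ → E} (hw : PCFun w) {t : ℝ}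
    (ht : 0 ≤ t) : PCFun (fun s => if s ≤ t then w s else w t) := by
  obtain ⟨⟨M, hM⟩, hrc, hpc⟩ := hw
  refine ⟨⟨M, ?_⟩, ?_, ?_⟩
  · intro s hs
    by_cases h : s ≤ t
    · simpa [h] using hM s hs
    · simpa [h] using hM t ht
  · intro s hs
    rcases lt_or_ge s t with hst | hst
    · refine (hrc s hs).congr_of_eventuallyEq ?_ (by rw [if_pos hst.le])
      filter_upwards [mem_nhdsWithin_of_mem_nhds (Iio_mem_nhds hst)] with y hy
      rw [if_pos (le_of_lt (Set.mem_Iio.1 hy))]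
    · refine (continuousWithinAt_const (b := w t)).congr ?_ ?_
      · intro y hy
        by_cases h : y ≤ t
        · have : y = t := le_antisymm h (hst.trans hy)
          simp [h, this]
        · simp [h]
      · by_cases h : s ≤ t
        · have : s = t := le_antisymm h hst
          simp [h, this]
        · simp [h]
  · intro T hT
    obtain ⟨s0, hs0⟩ := hpc T hT
    refine ⟨insert t s0, ?_⟩
    intro x hx
    have hx1 : x ∈ Set.Icc 0 T := hx.1
    have hxt : x ≠ t := fun h => hx.2 (by simp [h])
    have hxs0 : x ∉ (s0 : Set ℝ) := fun h => hx.2 (by simp [h])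
    rcases hxt.lt_or_gt with hlt | hgt
    · have hbase : ContinuousWithinAt w (Set.Icc 0 T \ (s0 : Set ℝ)) x := hs0 x ⟨hx1, hxs0⟩
      have hmono : (Set.Icc 0 T \ ((insert t s0 : Finset ℝ) : Set ℝ)) ⊆
          (Set.Icc 0 T \ (s0 : Set ℝ)) := by
        apply Set.diff_subset_diff_right
        simp [Finset.coe_insert]
      refine ((hbase.mono hmono).congr_of_eventuallyEq ?_ (by rw [if_pos hlt.le]))
      filter_upwards [mem_nhdsWithin_of_mem_nhds (Iio_mem_nhds hlt)] with y hy
      rw [if_pos (le_of_lt (Set.mem_Iio.1 hy))]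
    · refine (continuousWithinAt_const (b := w t)).congr_of_eventuallyEq ?_
        (by rw [if_neg (not_le.mpr hgt)])
      filter_upwards [mem_nhdsWithin_of_mem_nhds (Ioi_mem_nhds hgt)] with y hy
      rw [if_neg (not_le.mpr (Set.mem_Ioi.1 hy))]

/-- A forward complete subsystem `Σᵢ` is UGS if and only if it satisfies a
UGS estimate in summation formulation with gains `γᵢⱼ, γᵢ ∈ K ∪ {0}` and `σᵢ ∈ K∞`. -/
theorem subsystem_ugs_iff_summation_formulation
    {n : ℕ} {X : Fin n → Type*} [∀ j, NormedAddCommGroup (X j)] {i : Fin n}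
    {U : Type*} {inp : InputSpace U} (S : Subsystem X i inp) :
    S.UGS ↔
      ∃ σ : ℝ → ℝ, ∃ γmat : {j : Fin n // j ≠ i} → ℝ → ℝ, ∃ γe : ℝ → ℝ,
        IsClassKinf σ ∧ (∀ j, IsClassKZero (γmat j)) ∧ IsClassKZero γe ∧
        ∀ x : X i, ∀ w, (∀ j, PCFun (w j)) → ∀ u ∈ inp.carrier, ∀ t ≥ (0:ℝ),
          ‖S.flow t x w u‖ ≤ σ ‖x‖
            + (∑ j : {j : Fin n // j ≠ i}, γmat j (supNormOn (w j) (Set.Icc 0 t)))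
            + γe (inp.normU u) := by
  constructor
  · rintro ⟨σ, γ, hσ, hγ, hest⟩
    rcases hγ with hγK | hγ0
    · have hK : IsClassK γ := hγK.1
      set m : ℝ := (Fintype.card {j : Fin n // j ≠ i} : ℝ) + 1 with hm_def
      have hm : (0:ℝ) < m := by positivity
      have hK' : IsClassK (fun r => γ (m * r)) := by
        refine ⟨?_, ?_, ?_, ?_⟩
        · exact hK.1.comp ((continuous_const.mul continuous_id).continuousOn)
            (fun r hr => Set.mem_Ici.2 (mul_nonneg hm.le (Set.mem_Ici.1 hr)))
        · intro p hp q hq hpq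
          exact hK.2.1 (Set.mem_Ici.2 (mul_nonneg hm.le (Set.mem_Ici.1 hp)))
            (Set.mem_Ici.2 (mul_nonneg hm.le (Set.mem_Ici.1 hq)))
            (mul_lt_mul_of_pos_left hpq hm)
        · simp [hK.2.2.1]
        · intro r hr; exact hK.2.2.2 _ (mul_nonneg hm.le hr)
      refine ⟨σ, fun _ r => γ (m * r), fun r => γ (m * r), hσ,
        fun j => Or.inl hK', Or.inl hK', ?_⟩
      intro x w hw u hu t ht
      set w' : ∀ j : {j : Fin n // j ≠ i}, ℝ → X j.1 :=
        fun j s => if s ≤ t then w j s else w j t with hw'def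
      have hw' : ∀ j, PCFun (w' j) := fun j => pc_trunc (hw j) ht
      have heq : S.flow t x w u = S.flow t x w' u := by
        refine S.causality t ht x w w' u hu u hu ?_ (fun s _ => rfl)
        intro j s hs
        simp [hw'def, hs.2]
      have hb := hest t ht x w' hw' u hu
      have hann : ∀ j : {j : Fin n // j ≠ i}, 0 ≤ supNormOn (w j) (Set.Icc 0 t) :=
        fun j => supNormOn_nonneg _ _
      have hr : 0 ≤ inp.normU u := inp.normU_nonneg u hu
      have hle : ∀ j : {j : Fin n // j ≠ i},
          supNormOn (w' j) (Set.Ici 0) ≤ supNormOn (w j) (Set.Icc 0 t) := by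
        intro j
        obtain ⟨M, hM⟩ := (hw j).1
        have hbdd : BddAbove ((fun s => ‖w j s‖) '' Set.Icc 0 t) :=
          bddAbove_norm_image hM (fun s hs => hs.1)
        refine supNormOn_le ?_ (hann j)
        intro s hs
        by_cases h : s ≤ t
        · simpa [hw'def, h] using le_supNormOn hbdd ⟨hs, h⟩
        · simpa [hw'def, h] using le_supNormOn hbdd (Set.mem_Icc.2 ⟨ht, le_rfl⟩)
      have hP : pairNorm w' (inp.normU u) ≤
          (∑ j : {j : Fin n // j ≠ i}, supNormOn (w j) (Set.Icc 0 t)) + inp.normU u := by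
        unfold pairNorm
        refine le_trans (Real.sqrt_le_sqrt ?_)
          (sqrt_sum_sq_le (fun j => supNormOn (w j) (Set.Icc 0 t)) hann hr)
        have h1 : ∑ j : {j : Fin n // j ≠ i}, supNormOn (w' j) (Set.Ici 0) ^ 2 ≤
            ∑ j : {j : Fin n // j ≠ i}, supNormOn (w j) (Set.Icc 0 t) ^ 2 :=
          Finset.sum_le_sum fun j _ => pow_le_pow_left₀ (supNormOn_nonneg _ _) (hle j) 2
        linarith
      have hsum0 : 0 ≤ ∑ j : {j : Fin n // j ≠ i}, supNormOn (w j) (Set.Icc 0 t) :=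
        Finset.sum_nonneg fun j _ => hann j
      have hγP : γ (pairNorm w' (inp.normU u)) ≤
          γ ((∑ j : {j : Fin n // j ≠ i}, supNormOn (w j) (Set.Icc 0 t)) + inp.normU u) :=
        hK.2.1.monotoneOn (Set.mem_Ici.2 (Real.sqrt_nonneg _))
          (Set.mem_Ici.2 (by linarith)) hP
      have hKey := classK_sum_bound hK (fun j => supNormOn (w j) (Set.Icc 0 t)) hann hr
      rw [← hm_def] at hKey
      rw [heq]
      show ‖S.flow t x w' u‖ ≤ σ ‖x‖
        + (∑ j : {j : Fin n // j ≠ i}, γ (m * supNormOn (w j) (Set.Icc 0 t)))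
        + γ (m * inp.normU u)
      linarith
    · refine ⟨σ, fun _ => fun _ => 0, fun _ => 0, hσ,
        fun j => Or.inr rfl, Or.inr rfl, ?_⟩
      intro x w hw u hu t ht
      have := hest t ht x w hw u hu
      rw [hγ0] at this
      simpa using this
  · rintro ⟨σ, γmat, γe, hσ, hmat, he, hest⟩
    refine ⟨σ, fun r => (∑ j : {j : Fin n // j ≠ i}, γmat j r) + γe r + r, hσ,
      Or.inl ⟨⟨?_, ?_, ?_, ?_⟩, ?_⟩, ?_⟩
    · exact ((continuousOn_finset_sum _ (fun j _ => classKZero_contOn (hmat j))).add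
        (classKZero_contOn he)).add continuousOn_id
    · intro p hp q hq hpq
      have h1 : ∑ j : {j : Fin n // j ≠ i}, γmat j p ≤ ∑ j : {j : Fin n // j ≠ i}, γmat j q :=
        Finset.sum_le_sum fun j _ => classKZero_mono (hmat j) (Set.mem_Ici.1 hp) hpq.le
      have h2 : γe p ≤ γe q := classKZero_mono he (Set.mem_Ici.1 hp) hpq.le
      show (∑ j : {j : Fin n // j ≠ i}, γmat j p) + γe p + p <
        (∑ j : {j : Fin n // j ≠ i}, γmat j q) + γe q + q
      linarith
    · show (∑ j : {j : Fin n // j ≠ i}, γmat j 0) + γe 0 + 0 = 0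
      rw [Finset.sum_eq_zero fun j _ => classKZero_zero (hmat j), classKZero_zero he]
      ring
    · intro r hr
      have h1 : 0 ≤ ∑ j : {j : Fin n // j ≠ i}, γmat j r :=
        Finset.sum_nonneg fun j _ => classKZero_nonneg (hmat j) hr
      have h2 : 0 ≤ γe r := classKZero_nonneg he hr
      show 0 ≤ (∑ j : {j : Fin n // j ≠ i}, γmat j r) + γe r + r
      linarith
    · intro M
      refine ⟨|M| + 1, by positivity, ?_⟩
      have h1 : 0 ≤ ∑ j : {j : Fin n // j ≠ i}, γmat j (|M| + 1) :=
        Finset.sum_nonneg fun j _ => classKZero_nonneg (hmat j) (by positivity)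
      have h2 : 0 ≤ γe (|M| + 1) := classKZero_nonneg he (by positivity)
      have h3 : M ≤ |M| := le_abs_self M
      show M < (∑ j : {j : Fin n // j ≠ i}, γmat j (|M| + 1)) + γe (|M| + 1) + (|M| + 1)
      linarith
    · intro t ht x w hw u hu
      have hbase := hest x w hw u hu t ht
      have hr : 0 ≤ inp.normU u := inp.normU_nonneg u hu
      have hjle : ∀ j : {j : Fin n // j ≠ i},
          supNormOn (w j) (Set.Icc 0 t) ≤ pairNorm w (inp.normU u) := by
        intro j
        obtain ⟨M, hM⟩ := (hw j).1
        have hbdd : BddAbove ((fun s => ‖w j s‖) '' Set.Ici 0) :=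
          bddAbove_norm_image hM (fun s hs => hs)
        have h1 : supNormOn (w j) (Set.Icc 0 t) ≤ supNormOn (w j) (Set.Ici 0) :=
          supNormOn_le (fun s hs => le_supNormOn hbdd hs.1) (supNormOn_nonneg _ _)
        have h2 : supNormOn (w j) (Set.Ici 0) ≤ pairNorm w (inp.normU u) := by
          unfold pairNorm
          have hsq : supNormOn (w j) (Set.Ici 0) ^ 2 ≤
              (∑ k : {j : Fin n // j ≠ i}, supNormOn (w k) (Set.Ici 0) ^ 2) +
                (inp.normU u) ^ 2 := by
            have h3 : supNormOn (w j) (Set.Ici 0) ^ 2 ≤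
                ∑ k : {j : Fin n // j ≠ i}, supNormOn (w k) (Set.Ici 0) ^ 2 :=
              Finset.single_le_sum
                (f := fun k : {j : Fin n // j ≠ i} => supNormOn (w k) (Set.Ici 0) ^ 2)
                (fun k _ => sq_nonneg _) (Finset.mem_univ j)
            nlinarith [sq_nonneg (inp.normU u)]
          calc supNormOn (w j) (Set.Ici 0)
              = Real.sqrt (supNormOn (w j) (Set.Ici 0) ^ 2) :=
                (Real.sqrt_sq (supNormOn_nonneg _ _)).symm
            _ ≤ _ := Real.sqrt_le_sqrt hsq
        linarith
      have hule : inp.normU u ≤ pairNorm w (inp.normU u) := by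
        unfold pairNorm
        have hsq : (inp.normU u) ^ 2 ≤
            (∑ k : {j : Fin n // j ≠ i}, supNormOn (w k) (Set.Ici 0) ^ 2) +
              (inp.normU u) ^ 2 := by
          have h3 : 0 ≤ ∑ k : {j : Fin n // j ≠ i}, supNormOn (w k) (Set.Ici 0) ^ 2 :=
            Finset.sum_nonneg fun k _ => sq_nonneg _
          linarith
        calc inp.normU u = Real.sqrt ((inp.normU u) ^ 2) := (Real.sqrt_sq hr).symm
          _ ≤ _ := Real.sqrt_le_sqrt hsq
      have hRnn : 0 ≤ pairNorm w (inp.normU u) := Real.sqrt_nonneg _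
      have hs1 : ∑ j : {j : Fin n // j ≠ i}, γmat j (supNormOn (w j) (Set.Icc 0 t)) ≤
          ∑ j : {j : Fin n // j ≠ i}, γmat j (pairNorm w (inp.normU u)) :=
        Finset.sum_le_sum fun j _ =>
          classKZero_mono (hmat j) (supNormOn_nonneg _ _) (hjle j)
      have hs2 : γe (inp.normU u) ≤ γe (pairNorm w (inp.normU u)) :=
        classKZero_mono he hr hule
      show ‖S.flow t x w u‖ ≤ σ ‖x‖ +
        ((∑ j : {j : Fin n // j ≠ i}, γmat j (pairNorm w (inp.normU u))) +
          γe (pairNorm w (inp.normU u)) + pairNorm w (inp.normU u))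
      linarith
end
end

section
/- (UGS small-gain theorem) Let Σᵢ=(Xᵢ,PC([0,∞),X_{≠i})×𝒰,φ̄ᵢ), i=1,…,n, be forward complete control systems, each satisfying the UGS estimate in summation formulation: there exist σᵢ∈K∞ and γᵢⱼ,γᵢ∈K∪{0} (γᵢᵢ=0) such that for all xᵢ∈Xᵢ, all w_{≠i}∈PC([0,∞),X_{≠i}), all u∈𝒰 and all t≥0: ‖φ̄ᵢ(t,xᵢ,(w_{≠i},u))‖_{Xᵢ} ≤ σᵢ(‖xᵢ‖_{Xᵢ}) + Σ_{j≠i}γᵢⱼ(‖wⱼ‖_{[0,t]}) + γᵢ(‖u‖_𝒰). Assume the interconnection Σ=(X,𝒰,φ) of Σ₁,…,Σₙ is a well-defined control system with the BIC property. If the gain operator Γ_⊕ built from Γ=(γᵢⱼ) satisfies the strong small-gain condition, then Σ is forward complete and UGS. -/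
open Set Filter

noncomputable section

/-- The small-gain condition for an operator `A : ℝⁿ₊ → ℝⁿ₊`:
`A(s) ≱ s` for all `s ∈ ℝⁿ₊ \ {0}`. -/
def SmallGainCond (n : ℕ) (A : (Fin n → ℝ) → (Fin n → ℝ)) : Prop :=
  ∀ s : Fin n → ℝ, (∀ i, 0 ≤ s i) → s ≠ 0 → ¬ ∀ i, s i ≤ A s i

/-- The strong small-gain condition: `A ∘ D` satisfies the small-gain condition for some
diagonal operator `D(s)ᵢ = sᵢ + αᵢ(sᵢ)` with `αᵢ ∈ K∞`. -/
def StrongSmallGainCond (n : ℕ) (A : (Fin n → ℝ) → (Fin n → ℝ)) : Prop :=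
  ∃ α : Fin n → ℝ → ℝ, (∀ i, IsClassKinf (α i)) ∧
    SmallGainCond n (fun s => A (fun i => s i + α i (s i)))

/-- The summation-type gain operator `Γ_⊕` built from a gain matrix. -/
def gainOpSum (n : ℕ) (γmat : Fin n → Fin n → ℝ → ℝ) : (Fin n → ℝ) → (Fin n → ℝ) :=
  fun s i => ∑ j, γmat i j (s j)

/-- The maximization-type gain operator `Γ_⊗` built from a gain matrix. -/
noncomputable def gainOpMax (n : ℕ) (γmat : Fin n → Fin n → ℝ → ℝ) :
    (Fin n → ℝ) → (Fin n → ℝ) :=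
  fun s i => ⨆ j, γmat i j (s j)

/-- The norm on the product state space `X = X₁ × ⋯ × Xₙ`:
`‖x‖_X = √(Σᵢ ‖xᵢ‖²)`. -/
noncomputable def fullNorm {n : ℕ} {X : Fin n → Type*} [∀ j, NormedAddCommGroup (X j)]
    (x : ∀ j, X j) : ℝ :=
  Real.sqrt (∑ j, ‖x j‖ ^ 2)

/-- A control system on the product state space `X = X₁ × ⋯ × Xₙ`, with a domain of
definition, satisfying the identity, causality, continuity and cocycle axioms;
this models the coupled system `Σ` of the subsystems `Σ₁, …, Σₙ`. -/
structure CoupledSystem {n : ℕ} (X : Fin n → Type*) [∀ j, NormedAddCommGroup (X j)]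
    {U : Type*} (inp : InputSpace U) where
  dom : Set (ℝ × (∀ j, X j) × (ℝ → U))
  flow : ℝ → (∀ j, X j) → (ℝ → U) → ∀ j, X j
  dom_sub : ∀ p ∈ dom, 0 ≤ p.1 ∧ p.2.2 ∈ inp.carrier
  dom_exists : ∀ x : ∀ j, X j, ∀ u ∈ inp.carrier,
    ∃ t > (0:ℝ), ∀ s ∈ Set.Icc 0 t, (s, x, u) ∈ dom
  identity : ∀ x : ∀ j, X j, ∀ u ∈ inp.carrier, flow 0 x u = x
  causality : ∀ t ≥ (0:ℝ), ∀ x : ∀ j, X j, ∀ u ∈ inp.carrier, ∀ v ∈ inp.carrier,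
    (t, x, u) ∈ dom → (t, x, v) ∈ dom → (∀ s ∈ Set.Icc 0 t, u s = v s) →
    flow t x u = flow t x v
  cont : ∀ x : ∀ j, X j, ∀ u ∈ inp.carrier, ∀ j,
    ContinuousOn (fun t => flow t x u j) {t : ℝ | (t, x, u) ∈ dom}
  cocycle : ∀ x : ∀ j, X j, ∀ u ∈ inp.carrier, ∀ t ≥ (0:ℝ), ∀ h ≥ (0:ℝ),
    (∀ s ∈ Set.Icc 0 (t + h), (s, x, u) ∈ dom) →
    flow h (flow t x u) (fun s => u (s + t)) = flow (t + h) x u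

namespace CoupledSystem

variable {n : ℕ} {X : Fin n → Type*} [∀ j, NormedAddCommGroup (X j)]
  {U : Type*} {inp : InputSpace U}

/-- `C` is the feedback interconnection of the subsystems `S i`: whenever the solution of the
coupled system exists, its `i`-th component coincides with the trajectory of `Σᵢ` driven by
the other components as internal inputs and by the external input `u`. -/
def IsInterconnection (C : CoupledSystem X inp) (S : ∀ i, Subsystem X i inp) : Prop :=
  ∀ t x u, (t, x, u) ∈ C.dom → ∀ i : Fin n,
    C.flow t x u i = (S i).flow t (x i) (fun j s => C.flow s x u j.1) u

/-- Forward completeness of the coupled system. -/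
def ForwardComplete (C : CoupledSystem X inp) : Prop :=
  ∀ t ≥ (0:ℝ), ∀ x : ∀ j, X j, ∀ u ∈ inp.carrier, (t, x, u) ∈ C.dom

/-- The boundedness-implies-continuation property of the coupled system. -/
def BIC (C : CoupledSystem X inp) : Prop :=
  ∀ x : ∀ j, X j, ∀ u ∈ inp.carrier,
    (∀ t ≥ (0:ℝ), (t, x, u) ∈ C.dom) ∨
    ∃ tmax > (0:ℝ),
      (∀ t, 0 ≤ t → t < tmax → (t, x, u) ∈ C.dom) ∧
      (∀ t ≥ tmax, (t, x, u) ∉ C.dom) ∧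
      ∀ M > (0:ℝ), ∃ t, 0 ≤ t ∧ t < tmax ∧ M < fullNorm (C.flow t x u)

/-- Uniform global stability of the coupled system. -/
def UGS (C : CoupledSystem X inp) : Prop :=
  ∃ σ γ : ℝ → ℝ, IsClassKinf σ ∧ IsClassKinfZero γ ∧
    ∀ t x u, (t, x, u) ∈ C.dom →
      fullNorm (C.flow t x u) ≤ σ (fullNorm x) + γ (inp.normU u)

/-- Input-to-state stability of the coupled system. -/
def ISS (C : CoupledSystem X inp) : Prop :=
  ∃ β : ℝ → ℝ → ℝ, ∃ γ : ℝ → ℝ, IsClassKL β ∧ IsClassK γ ∧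
    ∀ t x u, (t, x, u) ∈ C.dom →
      fullNorm (C.flow t x u) ≤ β (fullNorm x) t + γ (inp.normU u)

/-- The asymptotic gain property of the coupled system. -/
def AG (C : CoupledSystem X inp) : Prop :=
  ∃ γ : ℝ → ℝ, IsClassKinfZero γ ∧
    ∀ ε > (0:ℝ), ∀ x : ∀ j, X j, ∀ u ∈ inp.carrier, ∃ τ ≥ (0:ℝ),
      ∀ t ≥ τ, fullNorm (C.flow t x u) ≤ ε + γ (inp.normU u)

end CoupledSystem

namespace SGAux

/-- Weak comparison class: continuous, nondecreasing, zero at zero, nonneg on `[0,∞)`. -/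
def Kw (g : ℝ → ℝ) : Prop :=
  ContinuousOn g (Set.Ici 0) ∧ MonotoneOn g (Set.Ici 0) ∧ g 0 = 0 ∧ ∀ r ≥ (0:ℝ), 0 ≤ g r

lemma kw_of_classK {g : ℝ → ℝ} (h : IsClassK g) : Kw g :=
  ⟨h.1, h.2.1.monotoneOn, h.2.2.1, h.2.2.2⟩

lemma kw_of_classKZero {g : ℝ → ℝ} (h : IsClassKZero g) : Kw g := by
  rcases h with h | h
  · exact kw_of_classK h
  · subst h
    exact ⟨continuousOn_const, monotoneOn_const, rfl, fun r _ => le_refl 0⟩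

lemma Kw.id : Kw (fun r : ℝ => r) :=
  ⟨continuousOn_id, fun a _ b _ h => h, rfl, fun r hr => hr⟩

lemma Kw.add {f g : ℝ → ℝ} (hf : Kw f) (hg : Kw g) : Kw (fun r => f r + g r) :=
  ⟨hf.1.add hg.1, hf.2.1.add hg.2.1, by simp [hf.2.2.1, hg.2.2.1],
   fun r hr => add_nonneg (hf.2.2.2 r hr) (hg.2.2.2 r hr)⟩

lemma Kw.comp {f g : ℝ → ℝ} (hf : Kw f) (hg : Kw g) : Kw (fun r => f (g r)) := by
  have hmaps : Set.MapsTo g (Set.Ici 0) (Set.Ici 0) := fun r hr => hg.2.2.2 r hr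
  refine ⟨hf.1.comp hg.1 hmaps, fun a ha b hb hab => hf.2.1 (hmaps ha) (hmaps hb) (hg.2.1 ha hb hab),
    by simp [hg.2.2.1, hf.2.2.1], fun r hr => hf.2.2.2 _ (hg.2.2.2 r hr)⟩

lemma Kw.const_mul {g : ℝ → ℝ} (hg : Kw g) {c : ℝ} (hc : 0 ≤ c) : Kw (fun r => c * g r) :=
  ⟨hg.1.const_smul c, fun a ha b hb hab => mul_le_mul_of_nonneg_left (hg.2.1 ha hb hab) hc,
   by simp [hg.2.2.1], fun r hr => mul_nonneg hc (hg.2.2.2 r hr)⟩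

lemma Kw.sum {ι : Type*} (s : Finset ι) (f : ι → ℝ → ℝ) (h : ∀ i ∈ s, Kw (f i)) :
    Kw (fun r => ∑ i ∈ s, f i r) := by
  classical
  induction s using Finset.induction with
  | empty => simpa using ⟨continuousOn_const, monotoneOn_const, rfl, fun r _ => le_refl 0⟩
  | insert a s' hni ih =>
    simp only [Finset.sum_insert hni]
    exact (h a (Finset.mem_insert_self a s')).add
      (ih (fun i hi => h i (Finset.mem_insert_of_mem hi)))

/-- Inverse of a `K∞` function. -/
lemma kinf_inverse {α : ℝ → ℝ} (hα : IsClassKinf α) :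
    ∃ g : ℝ → ℝ, Continuous g ∧ Monotone g ∧ g 0 = 0 ∧
      ∀ r ≥ (0:ℝ), 0 ≤ g r ∧ α (g r) = r := by
  classical
  set b : ℝ → ℝ := fun r => if (0:ℝ) ≤ r then α (max r 0) else r with hbdef
  have hα0 : α 0 = 0 := hα.1.2.2.1
  have hcont : Continuous b := by
    apply Continuous.if_le
    · exact hα.1.1.comp_continuous (continuous_id.max continuous_const)
        (fun x => Set.mem_Ici.mpr (le_max_right _ _))
    · exact continuous_id
    · exact continuous_const
    · exact continuous_id
    · intro x hx; simp [← hx, hα0]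
  have hbnonneg : ∀ r ≥ (0:ℝ), b r = α r := by
    intro r hr; simp [hbdef, hr, max_eq_left hr]
  have hmono : StrictMono b := by
    intro x y hxy
    by_cases hx : (0:ℝ) ≤ x
    · have hy : (0:ℝ) ≤ y := hx.trans hxy.le
      rw [hbnonneg x hx, hbnonneg y hy]
      exact hα.1.2.1 hx hy hxy
    · by_cases hy : (0:ℝ) ≤ y
      · have : b x = x := by simp [hbdef, hx]
        rw [this, hbnonneg y hy]
        exact lt_of_lt_of_le (not_le.mp hx) (hα.1.2.2.2 y hy)
      · simp [hbdef, hx, hy, hxy]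
  have htop : Tendsto b atTop atTop := by
    rw [tendsto_atTop_atTop]
    intro M
    obtain ⟨r, hr, hMr⟩ := hα.2 M
    refine ⟨r, fun a ha => ?_⟩
    rw [hbnonneg a (hr.trans ha)]
    exact hMr.le.trans (hα.1.2.1.monotoneOn hr (hr.trans ha) ha)
  have hbot : Tendsto b atBot atBot := by
    rw [tendsto_atBot_atBot]
    intro M
    refine ⟨min M (-1), fun a ha => ?_⟩
    have hneg : ¬ (0:ℝ) ≤ a := by
      have := ha.trans (min_le_right M (-1)); linarith
    simp only [hbdef, if_neg hneg]
    exact ha.trans (min_le_left M (-1))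
  have hsurj : Function.Surjective b := hcont.surjective htop hbot
  let e : ℝ ≃o ℝ := StrictMono.orderIsoOfSurjective b hmono hsurj
  have he : ∀ x, e x = b x := fun x => rfl
  refine ⟨fun r => e.symm r, e.symm.continuous, e.symm.monotone, ?_, ?_⟩
  · have h0 : e 0 = 0 := by rw [he]; simp [hbdef, hα0]
    show e.symm 0 = 0
    exact e.symm_apply_eq.mpr h0.symm
  · intro r hr
    have hb : b (e.symm r) = r := by rw [← he, e.apply_symm_apply]
    have hnn : 0 ≤ e.symm r := by
      by_contra hlt
      push_neg at hlt
      have : b (e.symm r) = e.symm r := by simp [hbdef, not_le.mpr hlt]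
      rw [hb] at this; linarith
    exact ⟨hnn, by rw [← hbnonneg _ hnn, hb]⟩


/-- Key bounding lemma from the strong small-gain condition. -/
lemma sg_key {n : ℕ} (γmat : Fin n → Fin n → ℝ → ℝ)
    (hγ : ∀ i j, Kw (γmat i j))
    (hsg : StrongSmallGainCond n (gainOpSum n γmat)) :
    ∃ B : ℝ → ℝ, Kw B ∧ ∀ r ≥ (0:ℝ), ∀ s : Fin n → ℝ, (∀ i, 0 ≤ s i) →
      (∀ i, s i ≤ (∑ j, γmat i j (s j)) + r) → ∀ i, s i ≤ B r := by
  classical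
  obtain ⟨α, hα, hsgc⟩ := hsg
  -- inverses of α i
  choose αinv hαinvC hαinvM hαinv0 hαinvP using fun i => kinf_inverse (hα i)
  -- D i = id + α i is K∞; its inverse
  have hD : ∀ i, IsClassKinf (fun θ => θ + α i θ) := by
    intro i
    refine ⟨⟨continuousOn_id.add (hα i).1.1,
      fun a ha b hb hab => by
        have := (hα i).1.2.1 ha hb hab
        dsimp only; linarith,
      by simp [(hα i).1.2.2.1],
      fun r hr => add_nonneg hr ((hα i).1.2.2.2 r hr)⟩, ?_⟩
    intro M
    refine ⟨max M 0 + 1, by positivity, ?_⟩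
    have h1 : (0:ℝ) ≤ max M 0 + 1 := by positivity
    have := (hα i).1.2.2.2 _ h1
    have : M ≤ max M 0 := le_max_left M 0
    dsimp only
    nlinarith [(hα i).1.2.2.2 _ h1]
  choose Dinv hDinvC hDinvM hDinv0 hDinvP using fun i => kinf_inverse (hD i)
  -- the auxiliary functions
  set c : ℝ → ℝ := fun r => r + ∑ i, αinv i r with hcdef
  set r' : ℝ → ℝ := fun r => r + ∑ i, ∑ j, γmat i j (c r) with hrdef
  have hcKw : Kw c := Kw.id.add (Kw.sum Finset.univ _ (fun i _ =>
    ⟨(hαinvC i).continuousOn, (hαinvM i).monotoneOn _, hαinv0 i, fun r hr => (hαinvP i r hr).1⟩))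
  have hrKw : Kw r' := Kw.id.add (Kw.sum Finset.univ _ (fun i _ =>
    Kw.sum Finset.univ _ (fun j _ => (hγ i j).comp hcKw)))
  -- the recursive bounds
  set Bk : ℕ → ℝ → ℝ := fun k => Nat.rec (fun _ => (0:ℝ)) (fun _ Bp r => c r + Bp (r' r)) k
    with hBkdef
  have hBk0 : ∀ r, Bk 0 r = 0 := fun r => rfl
  have hBkS : ∀ k r, Bk (k+1) r = c r + Bk k (r' r) := fun k r => rfl
  have hBkKw : ∀ k, Kw (Bk k) := by
    intro k
    induction k with
    | zero => exact ⟨continuousOn_const, monotoneOn_const, rfl, fun r _ => le_refl 0⟩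
    | succ k ih =>
      have : Kw (fun r => c r + Bk k (r' r)) := hcKw.add (ih.comp hrKw)
      convert this using 1
  -- the main induction
  have key : ∀ k : ℕ, ∀ I : Finset (Fin n), I.card ≤ k → ∀ r ≥ (0:ℝ), ∀ s : Fin n → ℝ,
      (∀ i, 0 ≤ s i) → (∀ i ∉ I, s i = 0) →
      (∀ i ∈ I, s i ≤ (∑ j, γmat i j (s j)) + r) → ∀ i, s i ≤ Bk k r := by
    intro k
    induction k with
    | zero =>
      intro I hI r hr s hs0 hsupp _ i
      have : I = ∅ := Finset.card_eq_zero.mp (Nat.le_zero.mp hI)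
      rw [hBk0, hsupp i (by simp [this])]
    | succ k ih =>
      intro I hI r hr s hs0 hsupp hest i
      set θ : Fin n → ℝ := fun i => Dinv i (s i) with hθdef
      have hθP : ∀ i, 0 ≤ θ i ∧ θ i + α i (θ i) = s i := fun i => hDinvP i (s i) (hs0 i)
      by_cases hcase : ∀ i ∈ I, r ≤ α i (θ i)
      · -- all-small case: θ ≤ Γ_⊕(D θ), so θ = 0, so s = 0
        have hθ0 : ∀ i, θ i = 0 := by
          by_contra hne
          push_neg at hne
          obtain ⟨i₁, hi₁⟩ := hne
          have hnz : θ ≠ 0 := fun h => hi₁ (congrFun h i₁)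
          refine hsgc θ (fun i => (hθP i).1) hnz ?_
          intro j
          show θ j ≤ gainOpSum n γmat (fun i => θ i + α i (θ i)) j
          have hsum : (gainOpSum n γmat) (fun i => θ i + α i (θ i)) j
              = ∑ p, γmat j p (s p) := by
            simp only [gainOpSum]
            exact Finset.sum_congr rfl (fun p _ => by rw [(hθP p).2])
          rw [hsum]
          by_cases hj : j ∈ I
          · have h1 := hest j hj
            have h2 := hcase j hj
            have h3 := (hθP j).2
            linarith
          · have : θ j = 0 := by
              have hs : s j = 0 := hsupp j hj
              rw [hθdef]
              simp only [hs]
              -- Dinv j 0 = 0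
              exact hDinv0 j
            rw [this]
            exact Finset.sum_nonneg (fun p _ => (hγ j p).2.2.2 _ (hs0 p))
        have : s i = 0 := by
          have := (hθP i).2
          rw [hθ0 i, (hα i).1.2.2.1] at this
          linarith
        rw [this]
        exact (hBkKw (k+1)).2.2.2 r hr
      · -- some index is small
        push_neg at hcase
        obtain ⟨i₀, hi₀I, hi₀⟩ := hcase
        -- s i₀ ≤ c r
        have hsi₀ : s i₀ ≤ c r := by
          have hθb : θ i₀ ≤ αinv i₀ r := by
            by_contra hlt
            push_neg at hlt
            have h1 := (hαinvP i₀ r hr).2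
            have h2 := (hα i₀).1.2.1.monotoneOn (Set.mem_Ici.mpr (hαinvP i₀ r hr).1)
              (Set.mem_Ici.mpr (hθP i₀).1) hlt.le
            rw [h1] at h2
            linarith
          have h3 := (hθP i₀).2
          have h4 : αinv i₀ r ≤ ∑ p, αinv p r :=
            Finset.single_le_sum (fun p _ => (hαinvP p r hr).1) (Finset.mem_univ i₀)
          have : s i₀ = θ i₀ + α i₀ (θ i₀) := h3.symm
          rw [this, hcdef]
          dsimp only
          linarith
        -- pass to I.erase i₀ with updated s
        set s' : Fin n → ℝ := Function.update s i₀ 0 with hs'def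
        have hs'0 : ∀ i, 0 ≤ s' i := by
          intro i
          by_cases h : i = i₀ <;> simp [hs'def, h, Function.update, hs0 i]
        have hs'supp : ∀ i ∉ I.erase i₀, s' i = 0 := by
          intro i hi
          by_cases h : i = i₀
          · simp [hs'def, h]
          · have : i ∉ I := fun hIi => hi (Finset.mem_erase.mpr ⟨h, hIi⟩)
            simp [hs'def, Function.update_of_ne h, hsupp i this]
        have hr'0 : (0:ℝ) ≤ r' r := hrKw.2.2.2 r hr
        have hcr0 : (0:ℝ) ≤ c r := hcKw.2.2.2 r hr
        have hsum_split : ∀ i, (∑ j, γmat i j (s j)) ≤ (∑ j, γmat i j (s' j))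
            + ∑ p, ∑ q, γmat p q (c r) := by
          intro i
          have e1 : (∑ j, γmat i j (s j))
              = γmat i i₀ (s i₀) + ∑ j ∈ Finset.univ.erase i₀, γmat i j (s j) :=
            (Finset.add_sum_erase _ _ (Finset.mem_univ i₀)).symm
          have e2 : (∑ j, γmat i j (s' j))
              = γmat i i₀ (s' i₀) + ∑ j ∈ Finset.univ.erase i₀, γmat i j (s' j) :=
            (Finset.add_sum_erase _ _ (Finset.mem_univ i₀)).symm
          have e3 : ∑ j ∈ Finset.univ.erase i₀, γmat i j (s' j)
              = ∑ j ∈ Finset.univ.erase i₀, γmat i j (s j) := by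
            refine Finset.sum_congr rfl (fun j hj => ?_)
            rw [hs'def, Function.update_of_ne (Finset.mem_erase.mp hj).1]
          have e4 : s' i₀ = 0 := by simp [hs'def]
          have e5 : γmat i i₀ (s i₀) ≤ ∑ p, ∑ q, γmat p q (c r) := by
            have h1 : γmat i i₀ (s i₀) ≤ γmat i i₀ (c r) :=
              (hγ i i₀).2.1 (Set.mem_Ici.mpr (hs0 i₀)) (Set.mem_Ici.mpr hcr0) hsi₀
            have h2 : γmat i i₀ (c r) ≤ ∑ q, γmat i q (c r) :=
              Finset.single_le_sum (fun q _ => (hγ i q).2.2.2 _ hcr0) (Finset.mem_univ i₀)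
            have h3 : (∑ q, γmat i q (c r)) ≤ ∑ p, ∑ q, γmat p q (c r) :=
              Finset.single_le_sum
                (fun p _ => Finset.sum_nonneg (fun q _ => (hγ p q).2.2.2 _ hcr0))
                (Finset.mem_univ i)
            linarith
          rw [e1, e2, e3, e4, (hγ i i₀).2.2.1]
          linarith
        have hs'est : ∀ i ∈ I.erase i₀, s' i ≤ (∑ j, γmat i j (s' j)) + r' r := by
          intro i hi
          obtain ⟨hne, hiI⟩ := Finset.mem_erase.mp hi
          have h1 : s' i = s i := Function.update_of_ne hne 0 s
          rw [h1, hrdef]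
          have := hest i hiI
          have := hsum_split i
          dsimp only
          linarith
        have hcard : (I.erase i₀).card ≤ k := by
          have := Finset.card_erase_of_mem hi₀I
          omega
        have hIH := ih (I.erase i₀) hcard (r' r) hr'0 s' hs'0 hs'supp hs'est
        rw [hBkS]
        by_cases h : i = i₀
        · subst h
          have := (hBkKw k).2.2.2 (r' r) hr'0
          linarith
        · have h1 : s i = s' i := (Function.update_of_ne h 0 s).symm
          have := hIH i
          linarith
  refine ⟨Bk n, hBkKw n, fun r hr s hs0 hest i => ?_⟩
  exact key n Finset.univ (by simp) r hr s hs0 (fun i hi => absurd (Finset.mem_univ i) hi)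
    (fun i _ => hest i) i

end SGAux

/-- **UGS small-gain theorem.** If each forward complete subsystem `Σᵢ`
satisfies a UGS estimate in summation formulation, the interconnection `Σ` is a well-defined
control system with the BIC property, and the gain operator `Γ_⊕` satisfies the strong
small-gain condition, then `Σ` is forward complete and UGS. -/
theorem ugs_small_gain_theorem
    {n : ℕ} {X : Fin n → Type*} [∀ j, NormedAddCommGroup (X j)]
    {U : Type*} {inp : InputSpace U}
    (S : ∀ i, Subsystem X i inp) (C : CoupledSystem X inp)
    (σ : Fin n → ℝ → ℝ) (γmat : Fin n → Fin n → ℝ → ℝ) (γext : Fin n → ℝ → ℝ)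
    (hσ : ∀ i, IsClassKinf (σ i))
    (hγmat : ∀ i j, IsClassKZero (γmat i j))
    (hdiag : ∀ i, γmat i i = fun _ => 0)
    (hγext : ∀ i, IsClassKZero (γext i))
    (hUGSest : ∀ i : Fin n, ∀ x : X i, ∀ w, (∀ j, PCFun (w j)) → ∀ u ∈ inp.carrier,
      ∀ t ≥ (0:ℝ),
        ‖(S i).flow t x w u‖ ≤ σ i ‖x‖
          + (∑ j : {j : Fin n // j ≠ i}, γmat i j.1 (supNormOn (w j) (Set.Icc 0 t)))
          + γext i (inp.normU u))
    (hic : C.IsInterconnection S) (hBIC : C.BIC)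
    (hsg : StrongSmallGainCond n (gainOpSum n γmat)) :
    C.ForwardComplete ∧ C.UGS := by
  
  classical
  have hγKw : ∀ i j, SGAux.Kw (γmat i j) := fun i j => SGAux.kw_of_classKZero (hγmat i j)
  obtain ⟨B, hB, hBkey⟩ := SGAux.sg_key γmat hγKw hsg
  -- the whole segment [0, T] lies in the domain
  have hseg : ∀ (x : ∀ j, X j) (u : ℝ → U), u ∈ inp.carrier → ∀ T, (T, x, u) ∈ C.dom →
      ∀ s, 0 ≤ s → s ≤ T → (s, x, u) ∈ C.dom := by
    intro x u hu T hT s hs0 hsT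
    rcases hBIC x u hu with h | ⟨tmax, _, hin, hout, _⟩
    · exact h s hs0
    · have hTlt : T < tmax := by
        by_contra h
        exact hout T (not_lt.mp h) hT
      exact hin s hs0 (lt_of_le_of_lt hsT hTlt)
  set p : ℝ → ℝ := fun a => ∑ k, σ k a with hpdef
  set q : ℝ → ℝ := fun b => ∑ k, γext k b with hqdef
  have hpKw : SGAux.Kw p := SGAux.Kw.sum _ _ (fun k _ => SGAux.kw_of_classK (hσ k).1)
  have hqKw : SGAux.Kw q := SGAux.Kw.sum _ _ (fun k _ => SGAux.kw_of_classKZero (hγext k))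
  -- the core trajectory estimate
  have hcore : ∀ (x : ∀ j, X j) (u : ℝ → U), u ∈ inp.carrier → ∀ T, (T, x, u) ∈ C.dom →
      ∀ i, ‖C.flow T x u i‖ ≤ B (p (fullNorm x) + q (inp.normU u)) := by
    intro x u hu T hT
    have hT0 : (0:ℝ) ≤ T := (C.dom_sub _ hT).1
    have hcont : ∀ j, ContinuousOn (fun t => C.flow t x u j) (Set.Icc 0 T) :=
      fun j => (C.cont x u hu j).mono (fun s hs => hseg x u hu T hT s hs.1 hs.2)
    set sn : Fin n → ℝ := fun j => supNormOn (fun t => C.flow t x u j) (Set.Icc 0 T)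
      with hsndef
    have hbdd : ∀ j, BddAbove ((fun t => ‖C.flow t x u j‖) '' Set.Icc 0 T) :=
      fun j => isCompact_Icc.bddAbove_image ((hcont j).norm)
    have hmem : ∀ j, ∀ τ ∈ Set.Icc (0:ℝ) T, ‖C.flow τ x u j‖ ≤ sn j := by
      intro j τ hτ
      rw [hsndef]
      simp only [supNormOn]
      exact le_csSup (hbdd j) ⟨τ, hτ, rfl⟩
    have hsn0 : ∀ j, 0 ≤ sn j := fun j =>
      (norm_nonneg _).trans (hmem j 0 ⟨le_refl 0, hT0⟩)
    have hfn0 : 0 ≤ fullNorm x := Real.sqrt_nonneg _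
    have hu0 : 0 ≤ inp.normU u := inp.normU_nonneg u hu
    have hstep : ∀ i, sn i ≤ (∑ j, γmat i j (sn j)) +
        (p (fullNorm x) + q (inp.normU u)) := by
      intro i
      -- the frozen internal input
      set w : ∀ j : {j : Fin n // j ≠ i}, ℝ → X j.1 :=
        fun j s => C.flow (min s T) x u j.1 with hwdef
      have hwcont : ∀ j : {j : Fin n // j ≠ i}, ContinuousOn (w j) (Set.Ici 0) := by
        intro j
        have hm : Set.MapsTo (fun s : ℝ => min s T) (Set.Ici 0) (Set.Icc 0 T) :=
          fun s hs => ⟨le_min hs hT0, min_le_right _ _⟩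
        have := ContinuousOn.comp (hcont j.1)
          ((continuous_id.min continuous_const).continuousOn) hm
        exact this
      have hwPC : ∀ j, PCFun (w j) := by
        intro j
        refine ⟨?_, ?_, ?_⟩
        · obtain ⟨z, _, hmax⟩ := isCompact_Icc.exists_isMaxOn (Set.nonempty_Icc.mpr hT0)
            ((hcont j.1).norm)
          refine ⟨‖C.flow z x u j.1‖, fun t ht => ?_⟩
          exact isMaxOn_iff.mp hmax (min t T) ⟨le_min ht hT0, min_le_right _ _⟩
        · intro t ht
          exact (hwcont j t ht).mono (Set.Ici_subset_Ici.mpr ht)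
        · intro T' _
          exact ⟨∅, (hwcont j).mono (by intro a ha; simpa using ha.1.1)⟩
      have hτest : ∀ τ ∈ Set.Icc (0:ℝ) T, ‖C.flow τ x u i‖ ≤
          σ i ‖x i‖ + (∑ j, γmat i j (sn j)) + γext i (inp.normU u) := by
        intro τ hτ
        have hdomτ : (τ, x, u) ∈ C.dom := hseg x u hu T hT τ hτ.1 hτ.2
        have heq : C.flow τ x u i = (S i).flow τ (x i) w u := by
          rw [hic τ x u hdomτ i]
          refine (S i).causality τ hτ.1 (x i) _ w u hu u hu ?_ (fun s _ => rfl)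
          intro j s hs
          show C.flow s x u j.1 = C.flow (min s T) x u j.1
          rw [min_eq_left (hs.2.trans hτ.2)]
        have h1 := hUGSest i (x i) w hwPC u hu τ hτ.1
        rw [← heq] at h1
        have h3 : ∀ j : {j : Fin n // j ≠ i},
            γmat i j.1 (supNormOn (w j) (Set.Icc 0 τ)) ≤ γmat i j.1 (sn j.1) := by
          intro j
          have himg : (fun t => ‖w j t‖) '' Set.Icc 0 τ
              = (fun t => ‖C.flow t x u j.1‖) '' Set.Icc 0 τ := by
            apply Set.image_congr
            intro a ha
            show ‖C.flow (min a T) x u j.1‖ = _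
            rw [min_eq_left (ha.2.trans hτ.2)]
          have hsub : (fun t => ‖C.flow t x u j.1‖) '' Set.Icc 0 τ
              ⊆ (fun t => ‖C.flow t x u j.1‖) '' Set.Icc 0 T :=
            Set.image_mono (Set.Icc_subset_Icc le_rfl hτ.2)
          have hle : supNormOn (w j) (Set.Icc 0 τ) ≤ sn j.1 := by
            rw [hsndef]
            simp only [supNormOn]
            rw [himg]
            exact csSup_le_csSup (hbdd j.1)
              (Set.Nonempty.image _ (Set.nonempty_Icc.mpr hτ.1)) hsub
          have hge0 : 0 ≤ supNormOn (w j) (Set.Icc 0 τ) := by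
            simp only [supNormOn]
            have hmem0 : ‖w j 0‖ ∈ (fun t => ‖w j t‖) '' Set.Icc 0 τ :=
              ⟨0, ⟨le_refl 0, hτ.1⟩, rfl⟩
            have hbd : BddAbove ((fun t => ‖w j t‖) '' Set.Icc 0 τ) := by
              rw [himg]
              exact BddAbove.mono hsub (hbdd j.1)
            exact (norm_nonneg _).trans (le_csSup hbd hmem0)
          exact (hγKw i j.1).2.1 (Set.mem_Ici.mpr hge0) (Set.mem_Ici.mpr (hsn0 j.1)) hle
        have h4 : (∑ j : {j : Fin n // j ≠ i}, γmat i j.1 (sn j.1))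
            = ∑ j, γmat i j (sn j) := by
          have h5 : (∑ j ∈ Finset.univ.erase i, γmat i j (sn j))
              = ∑ j : {j : Fin n // j ≠ i}, γmat i j.1 (sn j.1) :=
            Finset.sum_subtype _ (by simp [Finset.mem_erase]) _
          rw [← h5, ← Finset.add_sum_erase _ (fun j => γmat i j (sn j)) (Finset.mem_univ i)]
          rw [hdiag i]
          simp
        have h2 : (∑ j : {j : Fin n // j ≠ i}, γmat i j.1 (supNormOn (w j) (Set.Icc 0 τ)))
            ≤ ∑ j, γmat i j (sn j) := by
          calc (∑ j : {j : Fin n // j ≠ i}, γmat i j.1 (supNormOn (w j) (Set.Icc 0 τ)))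
              ≤ ∑ j : {j : Fin n // j ≠ i}, γmat i j.1 (sn j.1) :=
                Finset.sum_le_sum (fun j _ => h3 j)
            _ = ∑ j, γmat i j (sn j) := h4
        linarith
      have hsup : sn i ≤ σ i ‖x i‖ + (∑ j, γmat i j (sn j)) + γext i (inp.normU u) := by
        rw [hsndef]
        simp only [supNormOn]
        apply csSup_le ((Set.nonempty_Icc.mpr hT0).image _)
        rintro b ⟨τ, hτ, rfl⟩
        exact hτest τ hτ
      have hxle : ‖x i‖ ≤ fullNorm x := by
        have h6 : ‖x i‖ = Real.sqrt (‖x i‖^2) := (Real.sqrt_sq (norm_nonneg _)).symm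
        rw [h6, fullNorm]
        apply Real.sqrt_le_sqrt
        exact Finset.single_le_sum (f := fun j => ‖x j‖^2)
          (fun j _ => sq_nonneg _) (Finset.mem_univ i)
      have hσle : σ i ‖x i‖ ≤ p (fullNorm x) := by
        have h1 : σ i ‖x i‖ ≤ σ i (fullNorm x) :=
          (hσ i).1.2.1.monotoneOn (Set.mem_Ici.mpr (norm_nonneg _))
            (Set.mem_Ici.mpr hfn0) hxle
        exact h1.trans (Finset.single_le_sum
          (fun k _ => (hσ k).1.2.2.2 _ hfn0) (Finset.mem_univ i))
      have hγe : γext i (inp.normU u) ≤ q (inp.normU u) :=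
        Finset.single_le_sum
          (fun k _ => (SGAux.kw_of_classKZero (hγext k)).2.2.2 _ hu0) (Finset.mem_univ i)
      linarith
    have hr0 : 0 ≤ p (fullNorm x) + q (inp.normU u) :=
      add_nonneg (hpKw.2.2.2 _ hfn0) (hqKw.2.2.2 _ hu0)
    have hkey := hBkey _ hr0 sn hsn0 hstep
    intro i
    exact (hmem i T ⟨hT0, le_refl T⟩).trans (hkey i)
  -- the overall gain functions
  have hsq0 : 0 ≤ Real.sqrt n := Real.sqrt_nonneg _
  have hcompKw : ∀ (g : ℝ → ℝ), SGAux.Kw g →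
      SGAux.Kw (fun a => Real.sqrt n * B (2 * g a)) := by
    intro g hg
    have h2g : SGAux.Kw (fun a => 2 * g a) := hg.const_mul (by norm_num)
    exact (hB.comp h2g).const_mul hsq0
  have hKinf : ∀ (g : ℝ → ℝ), SGAux.Kw g → IsClassKinf (fun a => a + g a) := by
    intro g hg
    refine ⟨⟨continuousOn_id.add hg.1, ?_, by simp [hg.2.2.1],
      fun r hr => add_nonneg hr (hg.2.2.2 r hr)⟩, ?_⟩
    · intro a ha b hb hab
      have := hg.2.1 ha hb hab.le
      dsimp only
      linarith
    · intro M
      refine ⟨max M 0 + 1, by positivity, ?_⟩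
      have h1 : (0:ℝ) ≤ max M 0 + 1 := by positivity
      have h2 := hg.2.2.2 _ h1
      have h3 : M ≤ max M 0 := le_max_left M 0
      dsimp only
      linarith
  set σh : ℝ → ℝ := fun a => a + Real.sqrt n * B (2 * p a) with hσhdef
  set γh : ℝ → ℝ := fun b => b + Real.sqrt n * B (2 * q b) with hγhdef
  have hσhKinf : IsClassKinf σh := hKinf _ (hcompKw p hpKw)
  have hγhKinf : IsClassKinf γh := hKinf _ (hcompKw q hqKw)
  -- the UGS bound
  have hbound : ∀ t x u, (t, x, u) ∈ C.dom →
      fullNorm (C.flow t x u) ≤ σh (fullNorm x) + γh (inp.normU u) := by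
    intro t x u ht
    have hu := (C.dom_sub _ ht).2
    have hc := hcore x u hu t ht
    have hfn0 : 0 ≤ fullNorm x := Real.sqrt_nonneg _
    have hu0 : 0 ≤ inp.normU u := inp.normU_nonneg u hu
    have hp0 : 0 ≤ p (fullNorm x) := hpKw.2.2.2 _ hfn0
    have hq0 : 0 ≤ q (inp.normU u) := hqKw.2.2.2 _ hu0
    have hr0 : 0 ≤ p (fullNorm x) + q (inp.normU u) := add_nonneg hp0 hq0
    have hBr0 : 0 ≤ B (p (fullNorm x) + q (inp.normU u)) := hB.2.2.2 _ hr0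
    have h1 : fullNorm (C.flow t x u) ≤
        Real.sqrt n * B (p (fullNorm x) + q (inp.normU u)) := by
      rw [fullNorm]
      have h2 : (∑ j, ‖C.flow t x u j‖^2)
          ≤ ∑ _j : Fin n, (B (p (fullNorm x) + q (inp.normU u)))^2 :=
        Finset.sum_le_sum (fun j _ => pow_le_pow_left₀ (norm_nonneg _) (hc j) 2)
      calc Real.sqrt (∑ j, ‖C.flow t x u j‖^2)
          ≤ Real.sqrt (∑ _j : Fin n, (B (p (fullNorm x) + q (inp.normU u)))^2) :=
            Real.sqrt_le_sqrt h2
        _ = Real.sqrt ((n : ℝ) * (B (p (fullNorm x) + q (inp.normU u)))^2) := by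
            rw [Finset.sum_const, Finset.card_univ, Fintype.card_fin, nsmul_eq_mul]
        _ = Real.sqrt n * B (p (fullNorm x) + q (inp.normU u)) := by
            rw [Real.sqrt_mul (Nat.cast_nonneg n), Real.sqrt_sq hBr0]
    have hsplit : B (p (fullNorm x) + q (inp.normU u))
        ≤ B (2 * p (fullNorm x)) + B (2 * q (inp.normU u)) := by
      rcases le_total (p (fullNorm x)) (q (inp.normU u)) with h | h
      · have hle : p (fullNorm x) + q (inp.normU u) ≤ 2 * q (inp.normU u) := by linarith
        have hb := hB.2.1 (Set.mem_Ici.mpr hr0) (Set.mem_Ici.mpr (by linarith : (0:ℝ) ≤ 2 * q (inp.normU u))) hle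
        have hb2 := hB.2.2.2 (2 * p (fullNorm x)) (by linarith)
        linarith
      · have hle : p (fullNorm x) + q (inp.normU u) ≤ 2 * p (fullNorm x) := by linarith
        have hb := hB.2.1 (Set.mem_Ici.mpr hr0) (Set.mem_Ici.mpr (by linarith : (0:ℝ) ≤ 2 * p (fullNorm x))) hle
        have hb2 := hB.2.2.2 (2 * q (inp.normU u)) (by linarith)
        linarith
    have h7 : Real.sqrt n * B (p (fullNorm x) + q (inp.normU u))
        ≤ Real.sqrt n * B (2 * p (fullNorm x)) + Real.sqrt n * B (2 * q (inp.normU u)) := by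
      have := mul_le_mul_of_nonneg_left hsplit hsq0
      linarith [this]
    have h8 : Real.sqrt n * B (2 * p (fullNorm x)) ≤ σh (fullNorm x) := by
      rw [hσhdef]
      dsimp only
      linarith
    have h9 : Real.sqrt n * B (2 * q (inp.normU u)) ≤ γh (inp.normU u) := by
      rw [hγhdef]
      dsimp only
      linarith
    linarith
  -- forward completeness
  have hFC : C.ForwardComplete := by
    intro t ht x u hu
    rcases hBIC x u hu with h | ⟨tmax, _, hin, _, hblow⟩
    · exact h t ht
    · exfalso
      have hfn0 : 0 ≤ fullNorm x := Real.sqrt_nonneg _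
      have hu0 : 0 ≤ inp.normU u := inp.normU_nonneg u hu
      have hG0 : 0 ≤ σh (fullNorm x) + γh (inp.normU u) :=
        add_nonneg (hσhKinf.1.2.2.2 _ hfn0) (hγhKinf.1.2.2.2 _ hu0)
      obtain ⟨τ, hτ0, hτlt, hM⟩ := hblow (σh (fullNorm x) + γh (inp.normU u) + 1)
        (by linarith)
      have := hbound τ x u (hin τ hτ0 hτlt)
      linarith
  exact ⟨hFC, σh, γh, hσhKinf, Or.inl hγhKinf, hbound⟩
end
end

section
/- (Weak ISS small-gain theorem) Let Σᵢ=(Xᵢ,PC([0,∞),X_{≠i})×𝒰,φ̄ᵢ), i=1,…,n, be forward complete control systems, each weakly ISS with the same gain matrix Γ=(γᵢⱼ) (γᵢⱼ∈K∪{0}, γᵢᵢ=0) for both the UGS and AG properties; that is, each Σᵢ satisfies the UGS estimate in summation formulation ‖φ̄ᵢ(t,xᵢ,(w_{≠i},u))‖_{Xᵢ} ≤ σᵢ(‖xᵢ‖_{Xᵢ}) + Σ_{j≠i}γᵢⱼ(‖wⱼ‖_{[0,t]}) + γᵢ(‖u‖_𝒰) with σᵢ∈K∞, and the AG estimate: for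 all xᵢ, u, w_{≠i}, ε>0 there is τᵢ<∞ with ‖φ̄ᵢ(t,xᵢ,(w_{≠i},u))‖_{Xᵢ} ≤ ε + Σ_{j≠i}γᵢⱼ(‖wⱼ‖_∞) + γᵢ(‖u‖_𝒰) for all t≥τᵢ. Assume the interconnection Σ=(X,𝒰,φ) is a well-defined control system with the BIC property. If the gain operator Γ_⊕ satisfies the strong small-gain condition, then Σ is forward complete and weakly ISS, i.e., Σ is UGS and has the AG property. -/
open Set Filter

noncomputable section

section SmallGainHelpers

lemma classKZero_props {γ : ℝ → ℝ} (h : IsClassKZero γ) :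
    ContinuousOn γ (Set.Ici 0) ∧ MonotoneOn γ (Set.Ici 0) ∧ γ 0 = 0 ∧ ∀ r ≥ (0:ℝ), 0 ≤ γ r := by
  rcases h with h | h
  · exact ⟨h.1, h.2.1.monotoneOn, h.2.2.1, h.2.2.2⟩
  · subst h
    exact ⟨continuousOn_const, fun a _ b _ _ => le_refl 0, rfl, fun r _ => le_refl 0⟩

lemma kinf_inverse {α : ℝ → ℝ} (hα : IsClassKinf α) :
    ∃ g : ℝ → ℝ, ContinuousOn g (Set.Ici 0) ∧ MonotoneOn g (Set.Ici 0) ∧ g 0 = 0 ∧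
      (∀ r ≥ (0:ℝ), 0 ≤ g r) ∧ ∀ s ≥ (0:ℝ), ∀ r, α s ≤ r → s ≤ g r := by
  obtain ⟨⟨hcont, hsm, hz, hnn⟩, hunb⟩ := hα
  set f : ℝ → ℝ := fun x => if 0 ≤ x then α x else x with hf
  have hfsm : StrictMono f := by
    intro a b hab
    by_cases ha : 0 ≤ a
    · have hb : 0 ≤ b := le_of_lt (lt_of_le_of_lt ha hab)
      simpa [hf, ha, hb] using hsm ha hb hab
    · by_cases hb : 0 ≤ b
      · simpa [hf, ha, hb] using lt_of_lt_of_le (not_le.mp ha) (hnn b hb)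
      · simpa [hf, ha, hb] using hab
  have hfsurj : Function.Surjective f := by
    intro y
    by_cases hy : 0 ≤ y
    · obtain ⟨b, hb, hyb⟩ := hunb y
      have hmem : y ∈ Set.Icc (α 0) (α b) := ⟨by rw [hz]; exact hy, le_of_lt hyb⟩
      obtain ⟨s, hs, hsy⟩ := intermediate_value_Icc hb (hcont.mono Set.Icc_subset_Ici_self) hmem
      exact ⟨s, by simp [hf, hs.1, hsy]⟩
    · exact ⟨y, by simp [hf, hy]⟩
  set e := StrictMono.orderIsoOfSurjective f hfsm hfsurj with he
  refine ⟨fun r => e.symm r, (OrderIso.continuous e.symm).continuousOn,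
    (e.symm.monotone).monotoneOn _, ?_, ?_, ?_⟩
  · have : f 0 = 0 := by simp [hf, hz]
    calc e.symm 0 = e.symm (f 0) := by rw [this]
    _ = 0 := StrictMono.orderIsoOfSurjective_symm_apply_self f hfsm hfsurj 0
  · intro r hr
    have h0 : e.symm 0 = 0 := by
      have : f 0 = 0 := by simp [hf, hz]
      calc e.symm 0 = e.symm (f 0) := by rw [this]
      _ = 0 := StrictMono.orderIsoOfSurjective_symm_apply_self f hfsm hfsurj 0
    calc (0:ℝ) = e.symm 0 := h0.symm
    _ ≤ e.symm r := e.symm.monotone hr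
  · intro s hs r har
    have hfs : f s = α s := by simp [hf, hs]
    calc s = e.symm (f s) := (StrictMono.orderIsoOfSurjective_symm_apply_self f hfsm hfsurj s).symm
    _ ≤ e.symm r := e.symm.monotone (by rw [hfs]; exact har)

lemma small_gain_bound (n : ℕ) (γmat : Fin n → Fin n → ℝ → ℝ)
    (hγ : ∀ i j, IsClassKZero (γmat i j))
    (hsg : StrongSmallGainCond n (gainOpSum n γmat)) :
    ∃ Φ : ℝ → ℝ, ContinuousOn Φ (Set.Ici 0) ∧ MonotoneOn Φ (Set.Ici 0) ∧ Φ 0 = 0 ∧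
      (∀ r ≥ (0:ℝ), 0 ≤ Φ r) ∧
      ∀ w v : Fin n → ℝ, (∀ i, 0 ≤ w i) → (∀ i, 0 ≤ v i) →
        (∀ i, w i ≤ (∑ j, γmat i j (w j)) + v i) →
        ∀ r, 0 ≤ r → (∀ i, v i ≤ r) → ∀ i, w i ≤ Φ r := by
  obtain ⟨α, hαK, hsgc⟩ := hsg
  choose g hg1 hg2 hg3 hg4 hg5 using fun i => kinf_inverse (hαK i)
  have hγc := fun i j => classKZero_props (hγ i j)
  set θ : ℝ → ℝ := fun r => r + ∑ i, g i r with hθdef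
  set G : ℝ → ℝ := fun r => ∑ p, ∑ q, γmat p q r with hGdef
  have hθcont : ContinuousOn θ (Set.Ici 0) :=
    continuousOn_id.add (continuousOn_finset_sum _ (fun i _ => hg1 i))
  have hθmono : MonotoneOn θ (Set.Ici 0) := fun a ha b hb hab =>
    add_le_add hab (Finset.sum_le_sum fun i _ => hg2 i ha hb hab)
  have hθ0 : θ 0 = 0 := by simp [hθdef, hg3]
  have hθnn : ∀ r ≥ (0:ℝ), 0 ≤ θ r := fun r hr =>
    add_nonneg hr (Finset.sum_nonneg fun i _ => hg4 i r hr)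
  have hGcont : ContinuousOn G (Set.Ici 0) :=
    continuousOn_finset_sum _ (fun p _ => continuousOn_finset_sum _ (fun q _ => (hγc p q).1))
  have hGmono : MonotoneOn G (Set.Ici 0) := fun a ha b hb hab =>
    Finset.sum_le_sum fun p _ => Finset.sum_le_sum fun q _ => (hγc p q).2.1 ha hb hab
  have hG0 : G 0 = 0 := by simp [hGdef, fun p q => (hγc p q).2.2.1]
  have hGnn : ∀ r ≥ (0:ℝ), 0 ≤ G r := fun r hr =>
    Finset.sum_nonneg fun p _ => Finset.sum_nonneg fun q _ => (hγc p q).2.2.2 r hr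
  set m : ℝ → ℝ := fun r => r + G (θ r) with hmdef
  have hmmem : ∀ r ∈ Set.Ici (0:ℝ), m r ∈ Set.Ici (0:ℝ) := fun r hr =>
    add_nonneg hr (hGnn _ (hθnn r hr))
  have hmcont : ContinuousOn m (Set.Ici 0) :=
    continuousOn_id.add (hGcont.comp hθcont (fun r hr => hθnn r hr))
  have hmmono : MonotoneOn m (Set.Ici 0) := fun a ha b hb hab =>
    add_le_add hab (hGmono (hθnn a ha) (hθnn b hb) (hθmono ha hb hab))
  have hm0 : m 0 = 0 := by simp [hmdef, hθ0, hG0]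
  set Phi : ℕ → ℝ → ℝ := fun k =>
    Nat.rec (motive := fun _ => ℝ → ℝ) (fun _ => 0)
      (fun _ ih r => max (θ r) (ih (m r))) k with hPhidef
  have hPhiS : ∀ k r, Phi (k+1) r = max (θ r) (Phi k (m r)) := fun k r => rfl
  have hPhi : ∀ k, ContinuousOn (Phi k) (Set.Ici 0) ∧ MonotoneOn (Phi k) (Set.Ici 0) ∧
      Phi k 0 = 0 ∧ ∀ r ≥ (0:ℝ), 0 ≤ Phi k r := by
    intro k
    induction k with
    | zero => exact ⟨continuousOn_const, fun a _ b _ _ => le_refl 0, rfl, fun r _ => le_refl 0⟩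
    | succ k ih =>
      refine ⟨hθcont.sup (ih.1.comp hmcont hmmem), ?_, ?_, ?_⟩
      · intro a ha b hb hab
        exact max_le_max (hθmono ha hb hab)
          (ih.2.1 (hmmem a ha) (hmmem b hb) (hmmono ha hb hab))
      · rw [hPhiS, hθ0, hm0, ih.2.2.1]; simp
      · intro r hr
        exact le_trans (hθnn r hr) (le_max_left _ _)
  have main : ∀ k : ℕ, ∀ I : Finset (Fin n), I.card ≤ k → ∀ w v : Fin n → ℝ,
      (∀ i, 0 ≤ w i) → (∀ i, 0 ≤ v i) →
      (∀ i ∈ I, w i ≤ (∑ j ∈ I, γmat i j (w j)) + v i) →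
      ∀ r, 0 ≤ r → (∀ i ∈ I, v i ≤ r) → ∀ i ∈ I, w i ≤ Phi k r := by
    intro k
    induction k with
    | zero =>
      intro I hI w v _ _ _ r _ _ i hi
      rw [Finset.card_eq_zero.mp (Nat.le_zero.mp hI)] at hi
      exact absurd hi (Finset.notMem_empty i)
    | succ k ih =>
      intro I hI w v hw hv hineq r hr hvr i hi
      have hex : ∀ p : Fin n, ∃ t, 0 ≤ t ∧ t + α p t = w p := by
        intro p
        have hαp := (hαK p).1
        have hcontp : ContinuousOn (fun t => t + α p t) (Set.Icc 0 (w p)) :=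
          continuousOn_id.add (hαp.1.mono (Set.Icc_subset_Ici_self))
        have h0 : (0:ℝ) + α p 0 = 0 := by rw [hαp.2.2.1]; ring
        have hmem : w p ∈ Set.Icc ((0:ℝ) + α p 0) (w p + α p (w p)) := by
          constructor
          · rw [h0]; exact hw p
          · nlinarith [hαp.2.2.2 (w p) (hw p)]
        obtain ⟨t, ht, htw⟩ := intermediate_value_Icc (hw p) hcontp hmem
        exact ⟨t, ht.1, htw⟩
      choose t ht1 ht2 using hex
      set s : Fin n → ℝ := fun p => if p ∈ I then t p else 0 with hsdef
      have hsnn : ∀ p, 0 ≤ s p := by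
        intro p; by_cases hp : p ∈ I <;> simp [hsdef, hp, ht1]
      have hds : ∀ p, s p + α p (s p) = if p ∈ I then w p else 0 := by
        intro p; by_cases hp : p ∈ I <;> simp [hsdef, hp, ht2, (hαK p).1.2.2.1]
      by_cases hs0 : s = 0
      · have : w i = 0 := by
          have := hds i
          rw [if_pos hi, hs0] at this
          simp [(hαK i).1.2.2.1] at this
          exact this.symm
        rw [this]
        exact (hPhi (k+1)).2.2.2 r hr
      · have := hsgc s hsnn hs0
        push_neg at this
        obtain ⟨i₀, hi₀⟩ := this
        have hDnn : ∀ p, 0 ≤ s p + α p (s p) :=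
          fun p => add_nonneg (hsnn p) ((hαK p).1.2.2.2 _ (hsnn p))
        have hsumnn : (0:ℝ) ≤ gainOpSum n γmat (fun p => s p + α p (s p)) i₀ :=
          Finset.sum_nonneg fun q _ => (hγc i₀ q).2.2.2 _ (hDnn q)
        have hi₀I : i₀ ∈ I := by
          by_contra hni
          have : s i₀ = 0 := by simp [hsdef, hni]
          rw [this] at hi₀
          exact absurd hi₀ (not_lt.mpr hsumnn)
        have hterm : ∀ j, γmat i₀ j (s j + α j (s j)) = if j ∈ I then γmat i₀ j (w j) else 0 := by
          intro j; by_cases hj : j ∈ I <;> simp [hds j, hj, (hγc i₀ j).2.2.1]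
        have hsum : (∑ j ∈ I, γmat i₀ j (w j))
            = gainOpSum n γmat (fun p => s p + α p (s p)) i₀ := by
          unfold gainOpSum
          simp only [hterm]
          rw [Finset.sum_ite_mem, Finset.univ_inter]
        have hwi₀eq : w i₀ = s i₀ + α i₀ (s i₀) := by rw [hds i₀, if_pos hi₀I]
        have hαlt : α i₀ (s i₀) < v i₀ := by
          have h1 := hineq i₀ hi₀I
          rw [hsum] at h1
          nlinarith [hwi₀eq]
        have hsle : s i₀ ≤ g i₀ r :=
          hg5 i₀ (s i₀) (hsnn i₀) r (le_trans (le_of_lt hαlt) (hvr i₀ hi₀I))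
        have hwθ : w i₀ ≤ θ r := by
          have h2 : α i₀ (s i₀) ≤ r := le_trans (le_of_lt hαlt) (hvr i₀ hi₀I)
          have h3 : g i₀ r ≤ ∑ p, g p r :=
            Finset.single_le_sum (fun p _ => hg4 p r hr) (Finset.mem_univ i₀)
          rw [hwi₀eq, hθdef]
          calc s i₀ + α i₀ (s i₀) ≤ g i₀ r + r := add_le_add hsle h2
          _ ≤ r + ∑ p, g p r := by linarith
        by_cases hii : i = i₀
        · rw [hii, hPhiS]
          exact le_trans hwθ (le_max_left _ _)
        · have hiI' : i ∈ I.erase i₀ := Finset.mem_erase.mpr ⟨hii, hi⟩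
          have hcard : (I.erase i₀).card ≤ k := by
            rw [Finset.card_erase_of_mem hi₀I]
            omega
          set v' : Fin n → ℝ := fun p => v p + γmat p i₀ (w i₀) with hv'def
          have hv'nn : ∀ p, 0 ≤ v' p := fun p =>
            add_nonneg (hv p) ((hγc p i₀).2.2.2 _ (hw i₀))
          have hineq' : ∀ p ∈ I.erase i₀,
              w p ≤ (∑ j ∈ I.erase i₀, γmat p j (w j)) + v' p := by
            intro p hp
            have h1 := hineq p (Finset.mem_of_mem_erase hp)
            rw [← Finset.sum_erase_add I _ hi₀I] at h1
            rw [hv'def]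
            dsimp only
            linarith
          have hv'r : ∀ p ∈ I.erase i₀, v' p ≤ m r := by
            intro p hp
            have h1 : γmat p i₀ (w i₀) ≤ γmat p i₀ (θ r) :=
              (hγc p i₀).2.1 (Set.mem_Ici.mpr (hw i₀)) (Set.mem_Ici.mpr (hθnn r hr)) hwθ
            have h2 : γmat p i₀ (θ r) ≤ G (θ r) := by
              have hb : γmat p i₀ (θ r) ≤ ∑ q, γmat p q (θ r) :=
                Finset.single_le_sum (fun q _ => (hγc p q).2.2.2 _ (hθnn r hr))
                  (Finset.mem_univ i₀)
              exact le_trans hb (Finset.single_le_sum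
                (fun p' _ => Finset.sum_nonneg fun q _ => (hγc p' q).2.2.2 _ (hθnn r hr))
                (Finset.mem_univ p))
            have := hvr p (Finset.mem_of_mem_erase hp)
            rw [hv'def, hmdef]
            dsimp only
            linarith
          have := ih (I.erase i₀) hcard w v' hw hv'nn hineq' (m r)
            (hmmem r hr) hv'r i hiI'
          rw [hPhiS]
          exact le_trans this (le_max_right _ _)
  refine ⟨Phi n, (hPhi n).1, (hPhi n).2.1, (hPhi n).2.2.1, (hPhi n).2.2.2, ?_⟩
  intro w v hw hv hineq r hr hvr i
  exact main n Finset.univ (le_of_eq (by simp)) w v hw hv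
    (fun p _ => hineq p) r hr (fun p _ => hvr p) i (Finset.mem_univ i)

lemma pcfun_of_contOn {E : Type*} [NormedAddCommGroup E] (w : ℝ → E) (M : ℝ)
    (hb : ∀ t ≥ (0:ℝ), ‖w t‖ ≤ M) (hc : ContinuousOn w (Set.Ici 0)) : PCFun w :=
  ⟨⟨M, hb⟩, fun t ht => (hc t ht).mono (Set.Ici_subset_Ici.mpr ht),
    fun T _ => ⟨(∅ : Finset ℝ), by simpa using hc.mono Set.Icc_subset_Ici_self⟩⟩

lemma sum_subtype_ne {n : ℕ} (i : Fin n) (f : Fin n → ℝ) (hfi : f i = 0) :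
    (∑ j : {j : Fin n // j ≠ i}, f j.1) = ∑ j, f j := by
  have h1 : ∑ j ∈ Finset.univ.erase i, f j = ∑ j : {j : Fin n // j ≠ i}, f j.1 :=
    Finset.sum_subtype _ (fun j => by simp) f
  rw [← h1, ← Finset.sum_erase_add Finset.univ f (Finset.mem_univ i), hfi, add_zero]

lemma norm_le_fullNorm {n : ℕ} {X : Fin n → Type*} [∀ j, NormedAddCommGroup (X j)]
    (x : ∀ j, X j) (i : Fin n) : ‖x i‖ ≤ fullNorm x := by
  rw [fullNorm, show ‖x i‖ = Real.sqrt (‖x i‖ ^ 2) from (Real.sqrt_sq (norm_nonneg _)).symm]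
  exact Real.sqrt_le_sqrt
    (Finset.single_le_sum (f := fun j => ‖x j‖ ^ 2) (fun j _ => sq_nonneg _) (Finset.mem_univ i))

lemma fullNorm_le {n : ℕ} {X : Fin n → Type*} [∀ j, NormedAddCommGroup (X j)]
    (x : ∀ j, X j) (m : ℝ) (hm : 0 ≤ m) (h : ∀ i, ‖x i‖ ≤ m) :
    fullNorm x ≤ Real.sqrt n * m := by
  rw [fullNorm]
  have h1 : (∑ j, ‖x j‖ ^ 2) ≤ (n : ℝ) * m ^ 2 := by
    calc (∑ j, ‖x j‖ ^ 2) ≤ ∑ _j : Fin n, m ^ 2 :=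
          Finset.sum_le_sum (fun j _ => pow_le_pow_left₀ (norm_nonneg _) (h j) 2)
    _ = (n : ℝ) * m ^ 2 := by simp [Finset.sum_const, Finset.card_univ, mul_comm]
  calc Real.sqrt (∑ j, ‖x j‖ ^ 2) ≤ Real.sqrt ((n : ℝ) * m ^ 2) := Real.sqrt_le_sqrt h1
  _ = Real.sqrt n * m := by
      rw [Real.sqrt_mul (Nat.cast_nonneg n), Real.sqrt_sq hm]

lemma kinf_of_aux (c : ℝ) (hc : 0 ≤ c) (h : ℝ → ℝ) (hcont : ContinuousOn h (Set.Ici 0))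
    (hmono : MonotoneOn h (Set.Ici 0)) (h0 : h 0 = 0) (hnn : ∀ r ≥ (0:ℝ), 0 ≤ h r) :
    IsClassKinf (fun r => c * h r + r) := by
  constructor
  · refine ⟨(continuousOn_const.mul hcont).add continuousOn_id, ?_, by simp [h0], ?_⟩
    · intro a ha b hb hab
      have := hmono ha hb (le_of_lt hab)
      have h2 : c * h a ≤ c * h b := mul_le_mul_of_nonneg_left this hc
      dsimp only
      linarith
    · intro r hr
      exact add_nonneg (mul_nonneg hc (hnn r hr)) hr
  · intro M
    refine ⟨max M 0 + 1, by positivity, ?_⟩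
    have h1 : 0 ≤ c * h (max M 0 + 1) :=
      mul_nonneg hc (hnn _ (by positivity))
    have h2 : M ≤ max M 0 := le_max_left M 0
    dsimp only
    linarith

lemma kinf_comp (c : ℝ) (hc : 0 ≤ c) (Φ g : ℝ → ℝ)
    (hΦc : ContinuousOn Φ (Set.Ici 0)) (hΦm : MonotoneOn Φ (Set.Ici 0)) (hΦ0 : Φ 0 = 0)
    (hΦnn : ∀ r ≥ (0:ℝ), 0 ≤ Φ r)
    (hgc : ContinuousOn g (Set.Ici 0)) (hgm : MonotoneOn g (Set.Ici 0)) (hg0 : g 0 = 0)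
    (hgnn : ∀ r ≥ (0:ℝ), 0 ≤ g r) :
    IsClassKinf (fun r => c * Φ (2 * g r) + r) := by
  apply kinf_of_aux c hc (fun r => Φ (2 * g r))
  · refine hΦc.comp (continuousOn_const.mul hgc) (fun r hr => ?_)
    have := hgnn r hr
    exact Set.mem_Ici.mpr (by linarith)
  · intro a ha b hb hab
    have h2a : (0:ℝ) ≤ 2 * g a := by have := hgnn a ha; linarith
    have h2b : (0:ℝ) ≤ 2 * g b := by have := hgnn b hb; linarith
    exact hΦm (Set.mem_Ici.mpr h2a) (Set.mem_Ici.mpr h2b) (by have := hgm ha hb hab; linarith)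
  · simp [hg0, hΦ0]
  · intro r hr
    have := hgnn r hr
    exact hΦnn _ (by linarith)

end SmallGainHelpers

/-- **Weak ISS small-gain theorem.** If each forward complete subsystem `Σᵢ`
is weakly ISS with the same gain matrix `Γ = (γᵢⱼ)` for both the UGS and the AG estimates,
the interconnection `Σ` is a well-defined control system with the BIC property, and the gain
operator `Γ_⊕` satisfies the strong small-gain condition, then `Σ` is forward complete and
weakly ISS, i.e. UGS with the AG property. -/
theorem weak_iss_small_gain_theorem
    {n : ℕ} {X : Fin n → Type*} [∀ j, NormedAddCommGroup (X j)]
    {U : Type*} {inp : InputSpace U}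
    (S : ∀ i, Subsystem X i inp) (C : CoupledSystem X inp)
    (σ : Fin n → ℝ → ℝ) (γmat : Fin n → Fin n → ℝ → ℝ) (γext : Fin n → ℝ → ℝ)
    (hσ : ∀ i, IsClassKinf (σ i))
    (hγmat : ∀ i j, IsClassKZero (γmat i j))
    (hdiag : ∀ i, γmat i i = fun _ => 0)
    (hγext : ∀ i, IsClassKZero (γext i))
    (hUGSest : ∀ i : Fin n, ∀ x : X i, ∀ w, (∀ j, PCFun (w j)) → ∀ u ∈ inp.carrier,
      ∀ t ≥ (0:ℝ),
        ‖(S i).flow t x w u‖ ≤ σ i ‖x‖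
          + (∑ j : {j : Fin n // j ≠ i}, γmat i j.1 (supNormOn (w j) (Set.Icc 0 t)))
          + γext i (inp.normU u))
    (hAGest : ∀ i : Fin n, ∀ x : X i, ∀ u ∈ inp.carrier, ∀ w, (∀ j, PCFun (w j)) →
      ∀ ε > (0:ℝ), ∃ τ ≥ (0:ℝ), ∀ t ≥ τ,
        ‖(S i).flow t x w u‖ ≤ ε
          + (∑ j : {j : Fin n // j ≠ i}, γmat i j.1 (supNormOn (w j) (Set.Ici 0)))
          + γext i (inp.normU u))
    (hic : C.IsInterconnection S) (hBIC : C.BIC)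
    (hsg : StrongSmallGainCond n (gainOpSum n γmat)) :
    C.ForwardComplete ∧ C.UGS ∧ C.AG := by
  classical
  obtain ⟨Φ, hΦc, hΦm, hΦ0, hΦnn, hΦbound⟩ := small_gain_bound n γmat hγmat hsg
  have hγextp := fun i => classKZero_props (hγext i)
  have hγmatp := fun i j => classKZero_props (hγmat i j)
  set σsum : ℝ → ℝ := fun r => ∑ i, σ i r with hσsumdef
  set γsum : ℝ → ℝ := fun r => ∑ i, γext i r with hγsumdef
  have hσsum_cont : ContinuousOn σsum (Set.Ici 0) :=
    continuousOn_finset_sum _ (fun i _ => (hσ i).1.1)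
  have hσsum_mono : MonotoneOn σsum (Set.Ici 0) := fun a ha b hb hab =>
    Finset.sum_le_sum fun i _ => ((hσ i).1.2.1.monotoneOn) ha hb hab
  have hσsum_0 : σsum 0 = 0 := by simp [hσsumdef, fun i => (hσ i).1.2.2.1]
  have hσsum_nn : ∀ r ≥ (0:ℝ), 0 ≤ σsum r := fun r hr =>
    Finset.sum_nonneg fun i _ => (hσ i).1.2.2.2 r hr
  have hγsum_cont : ContinuousOn γsum (Set.Ici 0) :=
    continuousOn_finset_sum _ (fun i _ => (hγextp i).1)
  have hγsum_mono : MonotoneOn γsum (Set.Ici 0) := fun a ha b hb hab =>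
    Finset.sum_le_sum fun i _ => (hγextp i).2.1 ha hb hab
  have hγsum_0 : γsum 0 = 0 := by simp [hγsumdef, fun i => (hγextp i).2.2.1]
  have hγsum_nn : ∀ r ≥ (0:ℝ), 0 ≤ γsum r := fun r hr =>
    Finset.sum_nonneg fun i _ => (hγextp i).2.2.2 r hr
  have hsn : (0:ℝ) ≤ Real.sqrt n := Real.sqrt_nonneg _
  -- key uniform estimate on compact time intervals
  have key : ∀ (x : ∀ j, X j), ∀ u ∈ inp.carrier, ∀ T, 0 ≤ T →
      (∀ s ∈ Set.Icc 0 T, (s, x, u) ∈ C.dom) → ∀ i, ∀ τ ∈ Set.Icc (0:ℝ) T,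
      ‖C.flow τ x u i‖ ≤ Φ (σsum (fullNorm x) + γsum (inp.normU u)) := by
    intro x u hu T hT hdom
    have hcunn : 0 ≤ inp.normU u := inp.normU_nonneg u hu
    have hφcont : ∀ j, ContinuousOn (fun s => C.flow s x u j) (Set.Icc 0 T) := fun j =>
      (C.cont x u hu j).mono (fun s hs => hdom s hs)
    set ρ : Fin n → ℝ := fun i => supNormOn (fun s => C.flow s x u i) (Set.Icc 0 T) with hρdef
    have himgne : ∀ i, ((fun s => ‖C.flow s x u i‖) '' Set.Icc 0 T).Nonempty :=
      fun i => ⟨‖C.flow 0 x u i‖, 0, Set.mem_Icc.mpr ⟨le_refl 0, hT⟩, rfl⟩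
    have hbdd : ∀ i, BddAbove ((fun s => ‖C.flow s x u i‖) '' Set.Icc 0 T) := fun i =>
      IsCompact.bddAbove_image isCompact_Icc (continuous_norm.comp_continuousOn (hφcont i))
    have hρub : ∀ i, ∀ τ ∈ Set.Icc (0:ℝ) T, ‖C.flow τ x u i‖ ≤ ρ i := by
      intro i τ hτ
      rw [hρdef]
      exact le_csSup (hbdd i) ⟨τ, hτ, rfl⟩
    have hρnn : ∀ i, 0 ≤ ρ i := fun i =>
      le_trans (norm_nonneg _) (hρub i 0 (Set.mem_Icc.mpr ⟨le_refl 0, hT⟩))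
    have hest : ∀ i, ∀ τ ∈ Set.Icc (0:ℝ) T,
        ‖C.flow τ x u i‖ ≤ (∑ j, γmat i j (ρ j)) + (σ i ‖x i‖ + γext i (inp.normU u)) := by
      intro i τ hτ
      set Wtr : ∀ j : {j : Fin n // j ≠ i}, ℝ → X j.1 :=
        fun j s => C.flow (min s T) x u j.1 with hWtrdef
      have hWcont : ∀ j : {j : Fin n // j ≠ i}, ContinuousOn (Wtr j) (Set.Ici 0) := by
        intro j
        exact (hφcont j.1).comp ((continuous_id.min continuous_const).continuousOn)
          (fun s hs => Set.mem_Icc.mpr ⟨le_min hs hT, min_le_right _ _⟩)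
      have hWpc : ∀ j, PCFun (Wtr j) := by
        intro j
        refine pcfun_of_contOn _ (ρ j.1) (fun t ht => ?_) (hWcont j)
        exact hρub j.1 (min t T) (Set.mem_Icc.mpr ⟨le_min ht hT, min_le_right _ _⟩)
      have h1 : C.flow τ x u i = (S i).flow τ (x i) (fun j s => C.flow s x u j.1) u :=
        hic τ x u (hdom τ hτ) i
      have h2 : (S i).flow τ (x i) (fun j s => C.flow s x u j.1) u
          = (S i).flow τ (x i) Wtr u := by
        refine (S i).causality τ hτ.1 (x i) _ Wtr u hu u hu ?_ (fun s _ => rfl)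
        intro j s hs
        rw [hWtrdef]
        dsimp only
        rw [min_eq_left (le_trans hs.2 hτ.2)]
      have h3 := hUGSest i (x i) Wtr hWpc u hu τ hτ.1
      have h4 : ∀ j : {j : Fin n // j ≠ i},
          γmat i j.1 (supNormOn (Wtr j) (Set.Icc 0 τ)) ≤ γmat i j.1 (ρ j.1) := by
        intro j
        have hne : ((fun s => ‖Wtr j s‖) '' Set.Icc 0 τ).Nonempty :=
          ⟨‖Wtr j 0‖, 0, Set.mem_Icc.mpr ⟨le_refl 0, hτ.1⟩, rfl⟩
        have hub : ∀ a ∈ (fun s => ‖Wtr j s‖) '' Set.Icc 0 τ, a ≤ ρ j.1 := by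
          rintro a ⟨s, hs, rfl⟩
          exact hρub j.1 (min s T)
            (Set.mem_Icc.mpr ⟨le_min hs.1 hT, min_le_right _ _⟩)
        have hsle : supNormOn (Wtr j) (Set.Icc 0 τ) ≤ ρ j.1 := csSup_le hne hub
        have hsnn2 : 0 ≤ supNormOn (Wtr j) (Set.Icc 0 τ) :=
          le_trans (norm_nonneg (Wtr j 0))
            (le_csSup ⟨ρ j.1, hub⟩ ⟨0, Set.mem_Icc.mpr ⟨le_refl 0, hτ.1⟩, rfl⟩)
        exact (hγmatp i j.1).2.1 (Set.mem_Ici.mpr hsnn2)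
          (Set.mem_Ici.mpr (hρnn j.1)) hsle
      have h5 : (∑ j : {j : Fin n // j ≠ i}, γmat i j.1 (supNormOn (Wtr j) (Set.Icc 0 τ)))
          ≤ ∑ j : {j : Fin n // j ≠ i}, γmat i j.1 (ρ j.1) :=
        Finset.sum_le_sum fun j _ => h4 j
      have h6 : (∑ j : {j : Fin n // j ≠ i}, γmat i j.1 (ρ j.1)) = ∑ j, γmat i j (ρ j) :=
        sum_subtype_ne i (fun j => γmat i j (ρ j)) (by show γmat i i (ρ i) = 0; rw [hdiag i])
      rw [h1, h2]
      calc ‖(S i).flow τ (x i) Wtr u‖ ≤ _ := h3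
      _ ≤ (∑ j, γmat i j (ρ j)) + (σ i ‖x i‖ + γext i (inp.normU u)) := by
          rw [← h6]; linarith
    have hρineq : ∀ i, ρ i ≤ (∑ j, γmat i j (ρ j)) + (σ i ‖x i‖ + γext i (inp.normU u)) := by
      intro i
      rw [hρdef]
      refine csSup_le (himgne i) ?_
      rintro a ⟨τ, hτ, rfl⟩
      exact hest i τ hτ
    have hfnn : 0 ≤ fullNorm x := Real.sqrt_nonneg _
    have hr₀nn : 0 ≤ σsum (fullNorm x) + γsum (inp.normU u) :=
      add_nonneg (hσsum_nn _ hfnn) (hγsum_nn _ hcunn)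
    have hvnn : ∀ i, 0 ≤ σ i ‖x i‖ + γext i (inp.normU u) := fun i =>
      add_nonneg ((hσ i).1.2.2.2 _ (norm_nonneg _)) ((hγextp i).2.2.2 _ hcunn)
    have hvler : ∀ i, σ i ‖x i‖ + γext i (inp.normU u)
        ≤ σsum (fullNorm x) + γsum (inp.normU u) := by
      intro i
      have h1 : σ i ‖x i‖ ≤ σ i (fullNorm x) :=
        (hσ i).1.2.1.monotoneOn (Set.mem_Ici.mpr (norm_nonneg _))
          (Set.mem_Ici.mpr hfnn) (norm_le_fullNorm x i)
      have h2 : σ i (fullNorm x) ≤ σsum (fullNorm x) := by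
        rw [hσsumdef]
        exact Finset.single_le_sum (f := fun p => σ p (fullNorm x))
          (fun p _ => (hσ p).1.2.2.2 _ hfnn) (Finset.mem_univ i)
      have h3 : γext i (inp.normU u) ≤ γsum (inp.normU u) := by
        rw [hγsumdef]
        exact Finset.single_le_sum (f := fun p => γext p (inp.normU u))
          (fun p _ => (hγextp p).2.2.2 _ hcunn) (Finset.mem_univ i)
      linarith
    have hfinal := hΦbound ρ (fun i => σ i ‖x i‖ + γext i (inp.normU u)) hρnn hvnn hρineq
      (σsum (fullNorm x) + γsum (inp.normU u)) hr₀nn hvler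
    intro i τ hτ
    exact le_trans (hρub i τ hτ) (hfinal i)
  -- forward completeness
  have hFC : C.ForwardComplete := by
    intro T hT x u hu
    rcases hBIC x u hu with h | ⟨tmax, htmaxpos, hdom1, hdom2, hblow⟩
    · exact h T hT
    · exfalso
      have hr₀nn : 0 ≤ σsum (fullNorm x) + γsum (inp.normU u) :=
        add_nonneg (hσsum_nn _ (Real.sqrt_nonneg _)) (hγsum_nn _ (inp.normU_nonneg u hu))
      have hM : 0 < Real.sqrt n * Φ (σsum (fullNorm x) + γsum (inp.normU u)) + 1 := by
        have := mul_nonneg hsn (hΦnn _ hr₀nn)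
        linarith
      obtain ⟨t, ht0, httm, hgt⟩ := hblow _ hM
      have hkey := key x u hu t ht0
        (fun s hs => hdom1 s hs.1 (lt_of_le_of_lt hs.2 httm))
      have hb : fullNorm (C.flow t x u) ≤ Real.sqrt n * Φ (σsum (fullNorm x) + γsum (inp.normU u)) :=
        fullNorm_le _ _ (hΦnn _ hr₀nn) (fun i => hkey i t ⟨ht0, le_refl t⟩)
      linarith
  -- UGS
  have hUGS : C.UGS := by
    refine ⟨fun r => Real.sqrt n * Φ (2 * σsum r) + r,
      fun r => Real.sqrt n * Φ (2 * γsum r) + r,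
      kinf_comp _ hsn Φ σsum hΦc hΦm hΦ0 hΦnn hσsum_cont hσsum_mono hσsum_0 hσsum_nn,
      Or.inl (kinf_comp _ hsn Φ γsum hΦc hΦm hΦ0 hΦnn hγsum_cont hγsum_mono hγsum_0 hγsum_nn),
      ?_⟩
    rintro t x u hdom
    obtain ⟨ht0, hu⟩ := C.dom_sub (t, x, u) hdom
    have hcunn : 0 ≤ inp.normU u := inp.normU_nonneg u hu
    have hfnn : 0 ≤ fullNorm x := Real.sqrt_nonneg _
    have ha := hσsum_nn _ hfnn
    have hb := hγsum_nn _ hcunn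
    have hkey := key x u hu t ht0 (fun s hs => hFC s hs.1 x u hu)
    have h1 : fullNorm (C.flow t x u)
        ≤ Real.sqrt n * Φ (σsum (fullNorm x) + γsum (inp.normU u)) :=
      fullNorm_le _ _ (hΦnn _ (add_nonneg ha hb)) (fun i => hkey i t ⟨ht0, le_refl t⟩)
    have hsplit : Φ (σsum (fullNorm x) + γsum (inp.normU u))
        ≤ Φ (2 * σsum (fullNorm x)) + Φ (2 * γsum (inp.normU u)) := by
      rcases le_total (σsum (fullNorm x)) (γsum (inp.normU u)) with hle | hle
      · have hm1 := hΦm (Set.mem_Ici.mpr (add_nonneg ha hb))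
          (Set.mem_Ici.mpr (by linarith : (0:ℝ) ≤ 2 * γsum (inp.normU u))) (by linarith)
        have h0 := hΦnn (2 * σsum (fullNorm x)) (by linarith)
        linarith
      · have hm1 := hΦm (Set.mem_Ici.mpr (add_nonneg ha hb))
          (Set.mem_Ici.mpr (by linarith : (0:ℝ) ≤ 2 * σsum (fullNorm x))) (by linarith)
        have h0 := hΦnn (2 * γsum (inp.normU u)) (by linarith)
        linarith
    have h2 : Real.sqrt n * Φ (σsum (fullNorm x) + γsum (inp.normU u))
        ≤ Real.sqrt n * (Φ (2 * σsum (fullNorm x)) + Φ (2 * γsum (inp.normU u))) :=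
      mul_le_mul_of_nonneg_left hsplit hsn
    have h3 : Real.sqrt n * (Φ (2 * σsum (fullNorm x)) + Φ (2 * γsum (inp.normU u)))
        = Real.sqrt n * Φ (2 * σsum (fullNorm x)) + Real.sqrt n * Φ (2 * γsum (inp.normU u)) := by
      ring
    dsimp only
    linarith
  -- AG
  have hAG : C.AG := by
    refine ⟨fun r => Real.sqrt n * Φ (2 * γsum r) + r,
      Or.inl (kinf_comp _ hsn Φ γsum hΦc hΦm hΦ0 hΦnn hγsum_cont hγsum_mono hγsum_0 hγsum_nn),
      ?_⟩
    intro ε hε x u hu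
    have hcunn : 0 ≤ inp.normU u := inp.normU_nonneg u hu
    have hfnn : 0 ≤ fullNorm x := Real.sqrt_nonneg _
    have hr₀nn : 0 ≤ σsum (fullNorm x) + γsum (inp.normU u) :=
      add_nonneg (hσsum_nn _ hfnn) (hγsum_nn _ hcunn)
    set B := Φ (σsum (fullNorm x) + γsum (inp.normU u)) with hBdef
    have hBnn : 0 ≤ B := hΦnn _ hr₀nn
    have hdomall : ∀ s, 0 ≤ s → (s, x, u) ∈ C.dom := fun s hs => hFC s hs x u hu
    have hbound : ∀ i, ∀ t, 0 ≤ t → ‖C.flow t x u i‖ ≤ B := fun i t ht =>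
      key x u hu t ht (fun s hs => hdomall s hs.1) i t ⟨ht, le_refl t⟩
    have hφcont : ∀ j, ContinuousOn (fun s => C.flow s x u j) (Set.Ici 0) := fun j =>
      (C.cont x u hu j).mono (fun s hs => hdomall s hs)
    set Sset : Fin n → Set ℝ := fun i =>
      {a | 0 ≤ a ∧ ∃ T, 0 ≤ T ∧ ∀ t, T ≤ t → ‖C.flow t x u i‖ ≤ a} with hSsetdef
    have hSne : ∀ i, B ∈ Sset i := by
      intro i
      rw [hSsetdef]
      exact ⟨hBnn, 0, le_refl 0, fun t ht => hbound i t ht⟩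
    have hSbdd : ∀ i, BddBelow (Sset i) := by
      intro i
      refine ⟨0, fun a ha => ?_⟩
      rw [hSsetdef] at ha
      exact ha.1
    set ℓ : Fin n → ℝ := fun i => sInf (Sset i) with hℓdef
    have hℓnn : ∀ i, 0 ≤ ℓ i := by
      intro i
      rw [hℓdef]
      refine le_csInf ⟨B, hSne i⟩ (fun a ha => ?_)
      rw [hSsetdef] at ha
      exact ha.1
    have stepA : ∀ δ, 0 < δ → ∃ T, 0 ≤ T ∧ ∀ i, ∀ t, T ≤ t →
        ‖C.flow t x u i‖ ≤ ℓ i + δ := by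
      intro δ hδ
      have h1 : ∀ i : Fin n, ∃ T, 0 ≤ T ∧ ∀ t, T ≤ t → ‖C.flow t x u i‖ ≤ ℓ i + δ := by
        intro i
        have h2 : ∃ a ∈ Sset i, a < ℓ i + δ := by
          by_contra hcon
          push_neg at hcon
          have h3 : ℓ i + δ ≤ ℓ i := by
            rw [hℓdef]; exact le_csInf ⟨B, hSne i⟩ hcon
          linarith
        obtain ⟨a, haS, haℓ⟩ := h2
        rw [hSsetdef] at haS
        obtain ⟨_, T, hT, hTa⟩ := haS
        exact ⟨T, hT, fun t ht => le_trans (hTa t ht) (le_of_lt haℓ)⟩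
      choose T hT0 hTp using h1
      exact ⟨∑ i, T i, Finset.sum_nonneg (fun i _ => hT0 i), fun i t ht =>
        hTp i t (le_trans (Finset.single_le_sum (fun p _ => hT0 p) (Finset.mem_univ i)) ht)⟩
    have stepB : ∀ δ, 0 < δ → ∀ ε', 0 < ε' → ∀ i : Fin n,
        ℓ i ≤ ε' + (∑ j : {j : Fin n // j ≠ i}, γmat i j.1 (ℓ j.1 + δ))
          + γext i (inp.normU u) := by
      intro δ hδ ε' hε' i
      obtain ⟨T, hT0, hTail⟩ := stepA δ hδ
      set W : ∀ j : {j : Fin n // j ≠ i}, ℝ → X j.1 :=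
        fun j s => C.flow s x u j.1 with hWdef
      set Wsh : ∀ j : {j : Fin n // j ≠ i}, ℝ → X j.1 :=
        fun j s => W j (s + T) with hWshdef
      set ush : ℝ → U := fun s => u (s + T) with hushdef
      have hush : ush ∈ inp.carrier := by
        rw [hushdef]
        exact inp.shift_mem u hu T hT0
      have hWpc : ∀ j, PCFun (W j) := by
        intro j
        rw [hWdef]
        exact pcfun_of_contOn _ B (fun t ht => hbound j.1 t ht) (hφcont j.1)
      have hWshpc : ∀ j, PCFun (Wsh j) := by
        intro j
        rw [hWshdef, hWdef]
        refine pcfun_of_contOn _ B (fun t ht => hbound j.1 (t + T) (by linarith)) ?_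
        exact (hφcont j.1).comp ((continuous_id.add continuous_const).continuousOn)
          (fun s hs => by
            simp only [Set.mem_Ici] at *
            linarith)
      have h1 : ∀ t, 0 ≤ t → C.flow t x u i = (S i).flow t (x i) W u := by
        intro t ht
        rw [hWdef]
        exact hic t x u (hdomall t ht) i
      have hshift : ∀ h, 0 ≤ h →
          (S i).flow h (C.flow T x u i) Wsh ush = C.flow (T + h) x u i := by
        intro h hh
        rw [h1 T hT0, h1 (T + h) (by linarith), hWshdef, hushdef]
        exact (S i).cocycle (x i) W u hu hWpc T hT0 h hh
      obtain ⟨τ, hτ0, hτb⟩ := hAGest i (C.flow T x u i) ush hush Wsh hWshpc ε' hε'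
      have hsupb : ∀ j : {j : Fin n // j ≠ i},
          γmat i j.1 (supNormOn (Wsh j) (Set.Ici 0)) ≤ γmat i j.1 (ℓ j.1 + δ) := by
        intro j
        have hub : ∀ a ∈ (fun s => ‖Wsh j s‖) '' Set.Ici 0, a ≤ ℓ j.1 + δ := by
          rintro a ⟨s, hs, rfl⟩
          rw [hWshdef, hWdef]
          exact hTail j.1 (s + T) (by simp only [Set.mem_Ici] at hs; linarith)
        have hne : ((fun s => ‖Wsh j s‖) '' Set.Ici 0).Nonempty :=
          ⟨‖Wsh j 0‖, 0, Set.mem_Ici.mpr (le_refl 0), rfl⟩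
        have hle : supNormOn (Wsh j) (Set.Ici 0) ≤ ℓ j.1 + δ := csSup_le hne hub
        have hge : 0 ≤ supNormOn (Wsh j) (Set.Ici 0) :=
          le_trans (norm_nonneg (Wsh j 0))
            (le_csSup ⟨ℓ j.1 + δ, hub⟩ ⟨0, Set.mem_Ici.mpr (le_refl 0), rfl⟩)
        exact (hγmatp i j.1).2.1 (Set.mem_Ici.mpr hge)
          (Set.mem_Ici.mpr (by have := hℓnn j.1; linarith)) hle
      have hextb : γext i (inp.normU ush) ≤ γext i (inp.normU u) := by
        have h2 : inp.normU ush ≤ inp.normU u := by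
          rw [hushdef]
          exact inp.shift_norm u hu T hT0
        have h3 : 0 ≤ inp.normU ush := inp.normU_nonneg ush hush
        exact (hγextp i).2.1 (Set.mem_Ici.mpr h3) (Set.mem_Ici.mpr hcunn) h2
      have hbS : (ε' + (∑ j : {j : Fin n // j ≠ i}, γmat i j.1 (ℓ j.1 + δ))
          + γext i (inp.normU u)) ∈ Sset i := by
        rw [hSsetdef]
        constructor
        · have hs1 : 0 ≤ ∑ j : {j : Fin n // j ≠ i}, γmat i j.1 (ℓ j.1 + δ) :=
            Finset.sum_nonneg fun j _ =>
              (hγmatp i j.1).2.2.2 _ (by have := hℓnn j.1; linarith)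
          have hs2 := (hγextp i).2.2.2 _ hcunn
          linarith
        · refine ⟨T + τ, by linarith, fun t ht => ?_⟩
          have h5 : C.flow t x u i = (S i).flow (t - T) (C.flow T x u i) Wsh ush := by
            have h8 := hshift (t - T) (by linarith)
            rw [show T + (t - T) = t by ring] at h8
            exact h8.symm
          rw [h5]
          have h6 := hτb (t - T) (by linarith)
          have h7 : (∑ j : {j : Fin n // j ≠ i}, γmat i j.1 (supNormOn (Wsh j) (Set.Ici 0)))
              ≤ ∑ j : {j : Fin n // j ≠ i}, γmat i j.1 (ℓ j.1 + δ) :=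
            Finset.sum_le_sum fun j _ => hsupb j
          linarith
      have h9 := csInf_le (hSbdd i) hbS
      rw [hℓdef]
      exact h9
    -- small-gain on the limit superior vector
    have hℓbound : ∀ η, 0 < η → ∀ i, ℓ i ≤ Φ (γsum (inp.normU u) + η) := by
      intro η hη i
      have hineq : ∀ p : Fin n, ℓ p + η/2
          ≤ (∑ j, γmat p j (ℓ j + η/2)) + (η + γext p (inp.normU u)) := by
        intro p
        have h1 := stepB (η/2) (by linarith) (η/2) (by linarith) p
        have h2 : (∑ j : {j : Fin n // j ≠ p}, γmat p j.1 (ℓ j.1 + η/2))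
            = ∑ j, γmat p j (ℓ j + η/2) :=
          sum_subtype_ne p (fun j => γmat p j (ℓ j + η/2)) (by show γmat p p (ℓ p + η/2) = 0; rw [hdiag p])
        rw [h2] at h1
        linarith
      have hwnn : ∀ p, 0 ≤ ℓ p + η/2 := fun p => by have := hℓnn p; linarith
      have hvnn : ∀ p, 0 ≤ η + γext p (inp.normU u) := fun p => by
        have := (hγextp p).2.2.2 _ hcunn; linarith
      have hvle : ∀ p, η + γext p (inp.normU u) ≤ γsum (inp.normU u) + η := by
        intro p
        have h3 : γext p (inp.normU u) ≤ γsum (inp.normU u) := by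
          rw [hγsumdef]
          exact Finset.single_le_sum (f := fun q => γext q (inp.normU u))
            (fun q _ => (hγextp q).2.2.2 _ hcunn) (Finset.mem_univ p)
        linarith
      have hr : 0 ≤ γsum (inp.normU u) + η := by
        have := hγsum_nn _ hcunn; linarith
      have h4 := hΦbound (fun p => ℓ p + η/2) (fun p => η + γext p (inp.normU u))
        hwnn hvnn hineq (γsum (inp.normU u) + η) hr hvle i
      linarith
    set ε₂ := ε / (2 * (Real.sqrt n + 1)) with hε₂def
    have hε₂pos : 0 < ε₂ := by
      rw [hε₂def]
      apply div_pos hε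
      nlinarith
    have hγcu_nn : 0 ≤ γsum (inp.normU u) := hγsum_nn _ hcunn
    have hcw : ContinuousWithinAt Φ (Set.Ici 0) (γsum (inp.normU u)) :=
      hΦc _ (Set.mem_Ici.mpr hγcu_nn)
    rw [Metric.continuousWithinAt_iff] at hcw
    obtain ⟨η, hηpos, hηp⟩ := hcw ε₂ hε₂pos
    have hΦclose : Φ (γsum (inp.normU u) + η/2) < Φ (γsum (inp.normU u)) + ε₂ := by
      have hm1 : γsum (inp.normU u) + η/2 ∈ Set.Ici (0:ℝ) := Set.mem_Ici.mpr (by linarith)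
      have hm2 : dist (γsum (inp.normU u) + η/2) (γsum (inp.normU u)) < η := by
        rw [Real.dist_eq, show γsum (inp.normU u) + η/2 - γsum (inp.normU u) = η/2 by ring,
          abs_of_pos (by linarith)]
        linarith
      have h3 := hηp hm1 hm2
      rw [Real.dist_eq] at h3
      have h4 := abs_lt.mp h3
      linarith [h4.1, h4.2]
    have hℓfinal : ∀ i, ℓ i ≤ Φ (γsum (inp.normU u)) + ε₂ :=
      fun i => le_trans (hℓbound (η/2) (by linarith) i) (le_of_lt hΦclose)
    obtain ⟨T, hT0, hTail⟩ := stepA ε₂ hε₂pos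
    refine ⟨T, hT0, fun t ht => ?_⟩
    have hcomp : ∀ i, ‖C.flow t x u i‖ ≤ Φ (γsum (inp.normU u)) + 2 * ε₂ := by
      intro i
      have ha1 := hTail i t ht
      have ha2 := hℓfinal i
      linarith
    have hmnn : 0 ≤ Φ (γsum (inp.normU u)) + 2 * ε₂ := by
      have := hΦnn _ hγcu_nn; linarith
    have h1 : fullNorm (C.flow t x u) ≤ Real.sqrt n * (Φ (γsum (inp.normU u)) + 2 * ε₂) :=
      fullNorm_le _ _ hmnn hcomp
    have h2 : Φ (γsum (inp.normU u)) ≤ Φ (2 * γsum (inp.normU u)) :=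
      hΦm (Set.mem_Ici.mpr hγcu_nn) (Set.mem_Ici.mpr (by linarith)) (by linarith)
    have h3 : 2 * Real.sqrt n * ε₂ ≤ ε := by
      rw [hε₂def, ← mul_div_assoc, div_le_iff₀ (by nlinarith)]
      nlinarith
    have h4 : Real.sqrt n * (Φ (γsum (inp.normU u)) + 2 * ε₂)
        = Real.sqrt n * Φ (γsum (inp.normU u)) + 2 * Real.sqrt n * ε₂ := by ring
    have h5 : Real.sqrt n * Φ (γsum (inp.normU u)) ≤ Real.sqrt n * Φ (2 * γsum (inp.normU u)) :=
      mul_le_mul_of_nonneg_left h2 hsn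
    dsimp only
    linarith
  exact ⟨hFC, hUGS, hAG⟩
end
end
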